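/- arXiv:2106.13826 — 3 statements merged into one kernel-verified Lean document; each statement's English description precedes it below -/
import Mathlib

section
/- Let l be a linear term with l ∉ X and s a linear term. If m : l° → s° is a monomorphism in the category of Σ°-labeled graphs with label-nondecreasing premorphisms, then s = C[lσ] for some context C and substitution σ; moreover, the position of the vertex m(root(l°)) in s° equals the position of the hole in C. -/
open CategoryTheory
open Classical

noncomputable section

/-- Labeled graphs over a label type `W`. -/
structure LGraph (W : Type) : Type 1 where
  V : Type
  E : Type
  src : E → V
  tgt : E → V
  lV : V → W
  lE : E → W

section Cat

variable {W : Type} [Preorder W]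

/-- Label-nondecreasing graph premorphisms: the morphisms of the category `Graph^(L,≤)`. -/
structure GLHom (G H : LGraph W) : Type where
  onV : G.V → H.V
  onE : G.E → H.E
  src_comm : ∀ e, H.src (onE e) = onV (G.src e)
  tgt_comm : ∀ e, H.tgt (onE e) = onV (G.tgt e)
  lV_le : ∀ v, G.lV v ≤ H.lV (onV v)
  lE_le : ∀ e, G.lE e ≤ H.lE (onE e)

theorem GLHom.ext' {G H : LGraph W} {f g : GLHom G H}
    (h1 : f.onV = g.onV) (h2 : f.onE = g.onE) : f = g := by
  cases f; cases g
  cases h1; cases h2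
  rfl

/-- The category `Graph^(L,≤)` of labeled graphs over a preordered label set. -/
instance : Category (LGraph W) where
  Hom G H := GLHom G H
  id G := { onV := id, onE := id, src_comm := fun _ => rfl, tgt_comm := fun _ => rfl,
            lV_le := fun _ => le_refl _, lE_le := fun _ => le_refl _ }
  comp f g :=
    { onV := g.onV ∘ f.onV
      onE := g.onE ∘ f.onE
      src_comm := fun e => by
        simp only [Function.comp_apply, g.src_comm, f.src_comm]
      tgt_comm := fun e => by
        simp only [Function.comp_apply, g.tgt_comm, f.tgt_comm]
      lV_le := fun v => le_trans (f.lV_le v) (g.lV_le _)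
      lE_le := fun e => le_trans (f.lE_le e) (g.lE_le _) }
  id_comp f := GLHom.ext' rfl rfl
  comp_id f := GLHom.ext' rfl rfl
  assoc f g h := GLHom.ext' rfl rfl

/-- Vertex map of a morphism. -/
abbrev homV {G H : LGraph W} (f : G ⟶ H) : G.V → H.V := GLHom.onV f

/-- Edge map of a morphism. -/
abbrev homE {G H : LGraph W} (f : G ⟶ H) : G.E → H.E := GLHom.onE f

end Cat

/-- A graph is finite if it has finitely many vertices and edges. -/
def FiniteG {W : Type} (G : LGraph W) : Prop := Finite G.V ∧ Finite G.E
/-- The flat lattice on a base label set `A`: a global minimum `⊥`, a global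
maximum `⊤`, and all elements of `A` pairwise incomparable. -/
inductive Flat (A : Type) : Type
  | bot : Flat A
  | el : A → Flat A
  | top : Flat A

namespace Flat

def le {A : Type} : Flat A → Flat A → Prop
  | bot, _ => True
  | _, top => True
  | el a, el b => a = b
  | _, _ => False

instance (A : Type) : Preorder (Flat A) where
  le := Flat.le
  le_refl a := by cases a <;> trivial
  le_trans a b c hab hbc := by
    cases a <;> cases b <;> cases c <;> simp_all [Flat.le]

theorem bot_le {A : Type} (a : Flat A) : (Flat.bot : Flat A) ≤ a := by
  show Flat.le Flat.bot a
  cases a <;> trivial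

theorem le_top {A : Type} (a : Flat A) : a ≤ (Flat.top : Flat A) := by
  show Flat.le a Flat.top
  cases a <;> trivial

theorem le_cases {A : Type} {a b : Flat A} (h : a = Flat.bot ∨ b = Flat.top) : a ≤ b := by
  rcases h with h | h
  · subst h; exact bot_le _
  · subst h; exact le_top _

end Flat

/-- The flat lattice `Σ°` induced by a signature `S` together with the
positive natural numbers (used as edge labels). -/
abbrev FlatL (S : Type) := Flat (S ⊕ ℕ+)
/-- First-order terms over a signature `S` with arity function `ar` and
variable set `X`. -/
inductive Term (S : Type) (ar : S → ℕ) (X : Type) : Type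
  | var : X → Term S ar X
  | app : (f : S) → (Fin (ar f) → Term S ar X) → Term S ar X

namespace Term

variable {S : Type} {ar : S → ℕ} {X : Type}

/-- The subterm of `t` at a position (a list of (0-based) child indices),
if the position exists in `t`. -/
def sub? : Term S ar X → List ℕ → Option (Term S ar X)
  | t, [] => some t
  | .var _, _ :: _ => none
  | .app f ts, i :: p => if h : i < ar f then sub? (ts ⟨i, h⟩) p else none

/-- The set of variables occurring in a term. -/
def vars (t : Term S ar X) : Set X := {x | ∃ p, t.sub? p = some (.var x)}

/-- A term is linear if every variable occurs at most once in it. -/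
def Linear (t : Term S ar X) : Prop :=
  ∀ x p q, t.sub? p = some (.var x) → t.sub? q = some (.var x) → p = q

/-- The head symbol of a term, if any. -/
def head? : Term S ar X → Option S
  | .var _ => none
  | .app f _ => some f

/-- The function symbol at position `p` of `t`, if any. -/
def symAt (t : Term S ar X) (p : List ℕ) : Option S := (t.sub? p).bind head?

theorem sub?_append (t : Term S ar X) (p q : List ℕ) :
    t.sub? (p ++ q) = (t.sub? p).bind (fun s => s.sub? q) := by
  induction p generalizing t with
  | nil => simp [sub?]
  | cons i p ih =>
    cases t with
    | var x => simp [sub?]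
    | app f ts =>
      show sub? (.app f ts) (i :: (p ++ q)) = _
      simp only [sub?]
      by_cases h : i < ar f
      · simp [h, ih]
      · simp [h]

theorem symAt_sub (t : Term S ar X) {p : List ℕ} {f : S} (h : t.symAt p = some f) :
    ∃ ts : Fin (ar f) → Term S ar X, t.sub? p = some (.app f ts) := by
  unfold symAt at h
  cases hs : t.sub? p with
  | none => rw [hs] at h; simp at h
  | some s =>
    rw [hs] at h
    cases s with
    | var x => simp [head?] at h
    | app g ts =>
      simp [head?] at h
      subst h
      exact ⟨ts, rfl⟩

theorem edge_sub?_isSome (t : Term S ar X) {p : List ℕ} {i : ℕ}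
    (h : ∃ f, t.symAt p = some f ∧ i < ar f) :
    ∃ s, t.sub? (p ++ [i]) = some s := by
  obtain ⟨f, hf, hi⟩ := h
  obtain ⟨ts, hts⟩ := t.symAt_sub hf
  refine ⟨ts ⟨i, hi⟩, ?_⟩
  rw [sub?_append, hts]
  simp [sub?, hi]

theorem edge_tgt_var (t : Term S ar X) {p : List ℕ} {i : ℕ}
    (h : ∃ f, t.symAt p = some f ∧ i < ar f)
    (hn : ¬ (t.symAt (p ++ [i])).isSome) :
    ∃ x, t.sub? (p ++ [i]) = some (.var x) := by
  obtain ⟨s, hs⟩ := t.edge_sub?_isSome h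
  cases s with
  | var x => exact ⟨x, hs⟩
  | app g ts => exact absurd (by simp [symAt, hs, head?]) hn

theorem root_var (t : Term S ar X) (h : ¬ (t.symAt []).isSome) :
    ∃ x, t.sub? [] = some (.var x) := by
  cases t with
  | var x => exact ⟨x, rfl⟩
  | app f ts => exact absurd (by simp [symAt, sub?, head?]) h

/-- Vertices of the term encoding: symbol vertices (named by their position)
and variable heads (named by their variable). -/
def encV (t : Term S ar X) : Type :=
  {p : List ℕ // (t.symAt p).isSome} ⊕ {x : X // x ∈ t.vars}

/-- Edges of the term encoding: pairs of a symbol position and a child index. -/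
def encE (t : Term S ar X) : Type :=
  {pi : List ℕ × ℕ // ∃ f, t.symAt pi.1 = some f ∧ pi.2 < ar f}

/-- Target of an edge of the term encoding. -/
noncomputable def encTgt (t : Term S ar X) (e : t.encE) : t.encV :=
  if h : (t.symAt (e.1.1 ++ [e.1.2])).isSome then Sum.inl ⟨e.1.1 ++ [e.1.2], h⟩
  else Sum.inr ⟨Classical.choose (t.edge_tgt_var e.2 h),
    ⟨e.1.1 ++ [e.1.2], Classical.choose_spec (t.edge_tgt_var e.2 h)⟩⟩

/-- The term encoding `t°` of a term `t` as a `Σ°`-labeled graph. -/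
noncomputable def enc (t : Term S ar X) : LGraph (FlatL S) where
  V := t.encV
  E := t.encE
  src e := Sum.inl ⟨e.1.1, by obtain ⟨f, hf, _⟩ := e.2; simp [hf]⟩
  tgt := t.encTgt
  lV v := match v with
    | .inl q => (t.symAt q.1).elim Flat.bot (fun f => Flat.el (Sum.inl f))
    | .inr _ => Flat.bot
  lE e := Flat.el (Sum.inr ⟨e.1.2 + 1, Nat.succ_pos _⟩)

/-- The root of the term encoding (the vertex at position `ε`). -/
noncomputable def encRoot (t : Term S ar X) : t.encV :=
  if h : (t.symAt []).isSome then Sum.inl ⟨[], h⟩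
  else Sum.inr ⟨Classical.choose (t.root_var h), ⟨[], Classical.choose_spec (t.root_var h)⟩⟩

/-- `t.encVertAt p v` says that `v` is the vertex at position `p` in the term
encoding `t°`. -/
def encVertAt (t : Term S ar X) (p : List ℕ) : t.encV → Prop
  | .inl q => q.1 = p
  | .inr x => t.sub? p = some (.var x.1)

/-- The set of variable heads of a term encoding. -/
def varHeads (t : Term S ar X) : Set t.encV := Set.range Sum.inr

/-- Applying a substitution to a term. -/
def subst (σ : X → Term S ar X) : Term S ar X → Term S ar X
  | .var x => σ x
  | .app f ts => .app f (fun i => subst σ (ts i))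

end Term

/-- One-hole contexts over a signature. `app f i ts C` is the context
`f(ts 0, …, C, …, ts (n-1))` with `C` at argument position `i`. -/
inductive Ctx (S : Type) (ar : S → ℕ) (X : Type) : Type
  | hole : Ctx S ar X
  | app : (f : S) → (i : Fin (ar f)) → (Fin (ar f) → Term S ar X) → Ctx S ar X → Ctx S ar X

namespace Ctx

variable {S : Type} {ar : S → ℕ} {X : Type}

/-- Replacing the hole of a context by a term. -/
def fill : Ctx S ar X → Term S ar X → Term S ar X
  | .hole, t => t
  | .app f i ts C, t => .app f (Function.update ts i (C.fill t))

/-- The position of the hole of a context. -/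
def holePos : Ctx S ar X → List ℕ
  | .hole => []
  | .app _ i _ C => (i : ℕ) :: C.holePos

end Ctx

/-- A term rewrite rule `lhs → rhs`: `lhs` is not a variable and all variables
of `rhs` occur in `lhs`. -/
structure TRSRule (S : Type) (ar : S → ℕ) (X : Type) : Type where
  lhs : Term S ar X
  rhs : Term S ar X
  lhs_not_var : ∀ x, lhs ≠ Term.var x
  var_cond : rhs.vars ⊆ lhs.vars

namespace TRSRule

variable {S : Type} {ar : S → ℕ} {X : Type}

/-- A rule is linear if both sides are linear terms. -/
def Linear (ρ : TRSRule S ar X) : Prop := ρ.lhs.Linear ∧ ρ.rhs.Linear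

/-- The rewrite step relation generated by a single rule. -/
def Step (ρ : TRSRule S ar X) (s t : Term S ar X) : Prop :=
  ∃ (C : Ctx S ar X) (σ : X → Term S ar X),
    s = C.fill (ρ.lhs.subst σ) ∧ t = C.fill (ρ.rhs.subst σ)

/-- The rewrite step relation of a rule at a fixed position `p`. -/
def StepAt (ρ : TRSRule S ar X) (p : List ℕ) (s t : Term S ar X) : Prop :=
  ∃ (C : Ctx S ar X) (σ : X → Term S ar X),
    C.holePos = p ∧ s = C.fill (ρ.lhs.subst σ) ∧ t = C.fill (ρ.rhs.subst σ)

end TRSRule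

/-- The rewrite relation of a term rewriting system. -/
def TStep {S : Type} {ar : S → ℕ} {X : Type} (Rs : Set (TRSRule S ar X))
    (s t : Term S ar X) : Prop :=
  ∃ ρ ∈ Rs, ρ.Step s t
section Closures

variable {A : Type}

/-- Upper context closure `C[G]` of a graph rooted at `r`: adds a `⊤`-labeled
context vertex with a `⊤`-labeled edge to the root and a `⊤`-labeled loop. -/
def upperCC (G : LGraph (Flat A)) (r : G.V) : LGraph (Flat A) where
  V := G.V ⊕ Unit
  E := G.E ⊕ Bool
  src e := match e with
    | .inl e => .inl (G.src e)
    | .inr _ => .inr ()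
  tgt e := match e with
    | .inl e => .inl (G.tgt e)
    | .inr true => .inl r
    | .inr false => .inr ()
  lV v := match v with
    | .inl v => G.lV v
    | .inr _ => Flat.top
  lE e := match e with
    | .inl e => G.lE e
    | .inr _ => Flat.top

/-- Lower context closure `G↓_Xs`: relabels every vertex in `Xs` to `⊤` and
adds for it a fresh `⊤`-labeled vertex `x'` with a `⊤`-labeled edge `x → x'`
and a `⊤`-labeled loop on `x'`. -/
noncomputable def lowerCC (G : LGraph (Flat A)) (Xs : Set G.V) : LGraph (Flat A) where
  V := G.V ⊕ Xs
  E := G.E ⊕ (Xs ⊕ Xs)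
  src e := match e with
    | .inl e => .inl (G.src e)
    | .inr (.inl x) => .inl x.1
    | .inr (.inr x) => .inr x
  tgt e := match e with
    | .inl e => .inl (G.tgt e)
    | .inr (.inl x) => .inr x
    | .inr (.inr x) => .inr x
  lV v := match v with
    | .inl v => if v ∈ Xs then Flat.top else G.lV v
    | .inr _ => Flat.top
  lE e := match e with
    | .inl e => G.lE e
    | .inr _ => Flat.top

/-- The context closure `C[G↓_Xs]` of a rooted graph. -/
noncomputable def ctxCC (G : LGraph (Flat A)) (r : G.V) (Xs : Set G.V) : LGraph (Flat A) :=
  upperCC (lowerCC G Xs) (Sum.inl r)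

theorem ctxCC_lV_inl (G : LGraph (Flat A)) (r : G.V) (Xs : Set G.V) (v : G.V) :
    (ctxCC G r Xs).lV (Sum.inl (Sum.inl v)) = if v ∈ Xs then Flat.top else G.lV v := rfl

/-- The typing morphism `G ↣ C[G↓_Xs]` (an inclusion). -/
noncomputable def tCC (G : LGraph (Flat A)) (r : G.V) (Xs : Set G.V) :
    GLHom G (ctxCC G r Xs) where
  onV v := Sum.inl (Sum.inl v)
  onE e := Sum.inl (Sum.inl e)
  src_comm e := rfl
  tgt_comm e := rfl
  lV_le v := by
    rw [ctxCC_lV_inl]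
    split
    · exact Flat.le_top _
    · exact le_refl _
  lE_le e := le_refl _

end Closures

/-- The interface graph `I(t)` of a term `t`: a discrete graph with
`⊥`-labeled vertices `Var(t) ∪ {ε}`. -/
def interfaceG {S : Type} {ar : S → ℕ} {X : Type} (t : Term S ar X) : LGraph (FlatL S) where
  V := {x : X // x ∈ t.vars} ⊕ Unit
  E := Empty
  src e := e.elim
  tgt e := e.elim
  lV _ := Flat.bot
  lE e := e.elim

/-- The variable vertices of an interface graph. -/
def interfaceVars {S : Type} {ar : S → ℕ} {X : Type} (t : Term S ar X) :
    Set (interfaceG t).V := Set.range Sum.inl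
/-- A PBPO⁺ rewrite rule. -/
structure PBPORule (W : Type) [Preorder W] : Type 1 where
  L : LGraph W
  K : LGraph W
  R : LGraph W
  L' : LGraph W
  K' : LGraph W
  l : K ⟶ L
  r : K ⟶ R
  l' : K' ⟶ L'
  tL : L ⟶ L'
  tK : K ⟶ K'

/-- A PBPO⁺ rewrite step `G_L ⇒_ρ^α G_R`, consisting of a monic match `m`, an
adherence morphism `α` making the match square a pullback, the pullback `G_K`
of `α` along `l'`, and the pushout `G_R` of `r` along `u`. -/
structure RewriteStep {W : Type} [Preorder W] (ρ : PBPORule W) (G₀ G₁ : LGraph W) :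
    Type 1 where
  m : ρ.L ⟶ G₀
  mono_m : Mono m
  α : G₀ ⟶ ρ.L'
  matchPB : IsPullback (𝟙 ρ.L) m ρ.tL α
  GK : LGraph W
  gL : GK ⟶ G₀
  u' : GK ⟶ ρ.K'
  pbK : IsPullback gL u' α ρ.l'
  u : ρ.K ⟶ GK
  u_u' : u ≫ u' = ρ.tK
  u_gL : u ≫ gL = ρ.l ≫ m
  w : ρ.R ⟶ G₁
  gR : GK ⟶ G₁
  po : IsPushout ρ.r u w gR

/-- `G ⇒_ρ H` : there exists a PBPO⁺ rewrite step from `G` to `H` via `ρ`. -/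
def PBPOStep {W : Type} [Preorder W] (ρ : PBPORule W) (G H : LGraph W) : Prop :=
  Nonempty (RewriteStep ρ G H)

/-- A match `m` establishes a match (of the rule `ρ`) if it is monic and some
adherence morphism makes the match square a pullback. -/
def EstablishesMatch {W : Type} [Preorder W] (ρ : PBPORule W) {G : LGraph W}
    (m : ρ.L ⟶ G) : Prop :=
  Mono m ∧ ∃ α : G ⟶ ρ.L', m ≫ α = ρ.tL ∧ IsPullback (𝟙 ρ.L) m ρ.tL α

section RuleEnc

variable {S : Type} {ar : S → ℕ} {X : Type}

/-- The morphism `l : K → L` of the rule encoding. -/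
noncomputable def encKtoL (ρ : TRSRule S ar X) : GLHom (interfaceG ρ.rhs) ρ.lhs.enc where
  onV v := match v with
    | .inl x => Sum.inr ⟨x.1, ρ.var_cond x.2⟩
    | .inr _ => ρ.lhs.encRoot
  onE e := e.elim
  src_comm e := e.elim
  tgt_comm e := e.elim
  lV_le v := by cases v <;> exact Flat.bot_le _
  lE_le e := e.elim

/-- The morphism `r : K → R` of the rule encoding. -/
noncomputable def encKtoR (ρ : TRSRule S ar X) : GLHom (interfaceG ρ.rhs) ρ.rhs.enc where
  onV v := match v with
    | .inl x => Sum.inr x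
    | .inr _ => ρ.rhs.encRoot
  onE e := e.elim
  src_comm e := e.elim
  tgt_comm e := e.elim
  lV_le v := by cases v <;> exact Flat.bot_le _
  lE_le e := e.elim

/-- Mapping the primed (lower-closure) vertices of `K'` to those of `L'`. -/
noncomputable def mapPrime (ρ : TRSRule S ar X) :
    ↥(interfaceVars ρ.rhs) → ↥(ρ.lhs.varHeads) :=
  fun x' => match x' with
  | ⟨.inl x, _⟩ => ⟨Sum.inr ⟨x.1, ρ.var_cond x.2⟩, ⟨⟨x.1, ρ.var_cond x.2⟩, rfl⟩⟩
  | ⟨.inr u, h⟩ => absurd h (by rintro ⟨y, hy⟩; cases hy)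

/-- The morphism `l' : K' → L'` of the rule encoding. -/
noncomputable def encl' (ρ : TRSRule S ar X) :
    GLHom (ctxCC (interfaceG ρ.rhs) (Sum.inr ()) (interfaceVars ρ.rhs))
      (ctxCC ρ.lhs.enc ρ.lhs.encRoot ρ.lhs.varHeads) where
  onV v := match v with
    | .inl (.inl (.inl x)) => .inl (.inl (Sum.inr ⟨x.1, ρ.var_cond x.2⟩))
    | .inl (.inl (.inr _)) => .inl (.inl ρ.lhs.encRoot)
    | .inl (.inr x') => .inl (.inr (mapPrime ρ x'))
    | .inr u => .inr u
  onE e := match e with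
    | .inl (.inl e) => e.elim
    | .inl (.inr (.inl x')) => .inl (.inr (.inl (mapPrime ρ x')))
    | .inl (.inr (.inr x')) => .inl (.inr (.inr (mapPrime ρ x')))
    | .inr b => .inr b
  src_comm := by
    rintro ((e | (⟨(x | u), hv⟩ | ⟨(x | u), hv⟩)) | b)
    · exact e.elim
    · rfl
    · exact absurd hv (by rintro ⟨y, hy⟩; cases hy)
    · rfl
    · exact absurd hv (by rintro ⟨y, hy⟩; cases hy)
    · rfl
  tgt_comm := by
    rintro ((e | (x' | x')) | b)
    · exact e.elim
    · rfl
    · rfl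
    · cases b <;> rfl
  lV_le := by
    rintro (((x | u) | x') | c)
    · refine Flat.le_cases (Or.inr ?_)
      refine (ctxCC_lV_inl ρ.lhs.enc ρ.lhs.encRoot ρ.lhs.varHeads
        (Sum.inr ⟨x.1, ρ.var_cond x.2⟩)).trans ?_
      rw [if_pos ⟨⟨x.1, ρ.var_cond x.2⟩, rfl⟩]
    · refine Flat.le_cases (Or.inl ?_)
      refine (ctxCC_lV_inl (interfaceG ρ.rhs) (Sum.inr ()) (interfaceVars ρ.rhs)
        (Sum.inr u)).trans ?_
      rw [if_neg (by rintro ⟨y, hy⟩; cases hy)]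
      rfl
    · exact Flat.le_cases (Or.inr rfl)
    · exact Flat.le_cases (Or.inr rfl)
  lE_le := by
    rintro ((e | (x' | x')) | b)
    · exact e.elim
    · exact Flat.le_cases (Or.inr rfl)
    · exact Flat.le_cases (Or.inr rfl)
    · exact Flat.le_cases (Or.inr rfl)

/-- The rule encoding `ρ°` of a term rewrite rule `ρ : l → r` as a PBPO⁺ rule. -/
noncomputable def ruleEnc (ρ : TRSRule S ar X) : PBPORule (FlatL S) where
  L := ρ.lhs.enc
  K := interfaceG ρ.rhs
  R := ρ.rhs.enc
  L' := ctxCC ρ.lhs.enc ρ.lhs.encRoot ρ.lhs.varHeads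
  K' := ctxCC (interfaceG ρ.rhs) (Sum.inr ()) (interfaceVars ρ.rhs)
  l := encKtoL ρ
  r := encKtoR ρ
  l' := encl' ρ
  tL := tCC ρ.lhs.enc ρ.lhs.encRoot ρ.lhs.varHeads
  tK := tCC (interfaceG ρ.rhs) (Sum.inr ()) (interfaceVars ρ.rhs)

/-- The rewrite relation of an encoded term rewriting system `R°`. -/
def SysStep (Rs : Set (TRSRule S ar X)) (G H : LGraph (FlatL S)) : Prop :=
  ∃ ρ ∈ Rs, PBPOStep (ruleEnc ρ) G H

end RuleEnc
section Cycles

variable {W : Type}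

/-- `IsUPath G u es v`: `es` is an undirected path from `u` to `v` in `G`. -/
def IsUPath (G : LGraph W) : G.V → List G.E → G.V → Prop
  | u, [], v => u = v
  | u, e :: es, v =>
      (G.src e = u ∧ IsUPath G (G.tgt e) es v) ∨ (G.tgt e = u ∧ IsUPath G (G.src e) es v)

/-- An undirected cycle at `v`: a nonempty undirected path from `v` to `v`
with pairwise distinct edges. -/
def IsUCycle (G : LGraph W) (v : G.V) (es : List G.E) : Prop :=
  es ≠ [] ∧ es.Nodup ∧ IsUPath G v es v

/-- A cycle edge is an edge lying on some undirected cycle. -/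
def CycleEdge (G : LGraph W) (e : G.E) : Prop :=
  ∃ v es, IsUCycle G v es ∧ e ∈ es

/-- A graph is cycle-free if it contains no undirected cycle. -/
def CycleFree (G : LGraph W) : Prop := ¬ ∃ v es, IsUCycle G v es

/-- `[G]`: the graph obtained from `G` by deleting all cycle edges. -/
def dropCycles (G : LGraph W) : LGraph W where
  V := G.V
  E := {e : G.E // ¬ CycleEdge G e}
  src e := G.src e.1
  tgt e := G.tgt e.1
  lV := G.lV
  lE e := G.lE e.1

end Cycles

section Zones

variable {S : Type}

/-- A vertex is in-well-formed if it has at most one incoming edge. -/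
def InWF (G : LGraph (FlatL S)) (v : G.V) : Prop :=
  ∀ e e' : G.E, G.tgt e = v → G.tgt e' = v → e = e'

/-- A vertex is out-well-formed if its label is a function symbol `f` and it
has exactly `ar f` outgoing edges, labeled `1, …, ar f`. -/
def OutWF (G : LGraph (FlatL S)) (ar : S → ℕ) (v : G.V) : Prop :=
  ∃ f : S, G.lV v = Flat.el (Sum.inl f) ∧
    ∃ φ : Fin (ar f) ≃ {e : G.E // G.src e = v},
      ∀ i, G.lE (φ i).1 = Flat.el (Sum.inr ⟨(i : ℕ) + 1, Nat.succ_pos _⟩)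

/-- A vertex is good if it is out-well-formed and all its children are
in-well-formed; otherwise it is bad. -/
def Good (G : LGraph (FlatL S)) (ar : S → ℕ) (v : G.V) : Prop :=
  OutWF G ar v ∧ ∀ e : G.E, G.src e = v → InWF G (G.tgt e)

/-- The edges included in a zone by the zoning algorithm are exactly the edges
with a good source. -/
def ZoneEdge (G : LGraph (FlatL S)) (ar : S → ℕ) (e : G.E) : Prop :=
  Good G ar (G.src e)

/-- One directed step along an edge included in a zone. -/
def ZStep (G : LGraph (FlatL S)) (ar : S → ℕ) (u v : G.V) : Prop :=
  ∃ e, ZoneEdge G ar e ∧ G.src e = u ∧ G.tgt e = v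

/-- Two vertices lie in the same zone iff they are connected by edges included
in zones (equivalence closure of `ZStep`). -/
def SameZone (G : LGraph (FlatL S)) (ar : S → ℕ) : G.V → G.V → Prop :=
  Relation.EqvGen (ZStep G ar)

/-- A root of a zone: a vertex with no parent inside its zone. -/
def IsZoneRoot (G : LGraph (FlatL S)) (ar : S → ℕ) (r : G.V) : Prop :=
  ¬ ∃ e, ZoneEdge G ar e ∧ G.tgt e = r

/-- A directed path along zone edges. -/
def IsZPath (G : LGraph (FlatL S)) (ar : S → ℕ) : G.V → List G.E → G.V → Prop
  | u, [], v => u = v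
  | u, e :: es, v => ZoneEdge G ar e ∧ G.src e = u ∧ IsZPath G ar (G.tgt e) es v

/-- The zone of `v₀`, as a subgraph of `G`, with every bad vertex relabeled
with `⊥`. -/
noncomputable def zoneTermGraph (G : LGraph (FlatL S)) (ar : S → ℕ) (v₀ : G.V) :
    LGraph (FlatL S) where
  V := {u : G.V // SameZone G ar u v₀}
  E := {e : G.E // ZoneEdge G ar e ∧ SameZone G ar (G.src e) v₀}
  src e := ⟨G.src e.1, e.2.2⟩
  tgt e := ⟨G.tgt e.1,
    Relation.EqvGen.trans _ _ _
      (Relation.EqvGen.symm _ _ (Relation.EqvGen.rel _ _ ⟨e.1, e.2.1, rfl, rfl⟩)) e.2.2⟩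
  lV u := if Good G ar u.1 then G.lV u.1 else Flat.bot
  lE e := G.lE e.1

end Zones

section Relabel

variable {W : Type}

/-- `G` with the label of vertex `v` changed to `l`. -/
noncomputable def relabelV (G : LGraph W) (v : G.V) (l : W) : LGraph W :=
  { G with lV := Function.update G.lV v l }

/-- `G` with the label of every vertex in `s` changed to `l`. -/
noncomputable def relabelSet (G : LGraph W) (s : Set G.V) (l : W) : LGraph W :=
  { G with lV := fun u => if u ∈ s then l else G.lV u }

end Relabel

section Proof3

variable {S : Type} {ar : S → ℕ} {X : Type}

lemma enc_lV_symbol (t : Term S ar X) {p : List ℕ} (h : (t.symAt p).isSome) {f : S}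
    (hf : t.symAt p = some f) :
    t.enc.lV (Sum.inl ⟨p, h⟩) = Flat.el (Sum.inl f) := by
  show (t.symAt p).elim Flat.bot _ = _
  rw [hf]
  rfl

lemma sub?_nil (t : Term S ar X) : t.sub? [] = some t := by
  cases t <;> rfl

lemma inl_val_eq {α β : Type*} {P : α → Prop} {a b : {x // P x}}
    (h : (Sum.inl a : {x // P x} ⊕ β) = Sum.inl b) : a.1 = b.1 :=
  congrArg Subtype.val (Sum.inl.inj h)

lemma maps_symbol {l s : Term S ar X} (m : GLHom l.enc s.enc) (p : List ℕ)
    (hp : (l.symAt p).isSome) {f : S} (hf : l.symAt p = some f) :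
    ∃ (q : List ℕ) (hq : (s.symAt q).isSome),
      m.onV (Sum.inl ⟨p, hp⟩) = Sum.inl ⟨q, hq⟩ ∧ s.symAt q = some f := by
  have hle := m.lV_le (Sum.inl ⟨p, hp⟩)
  rw [enc_lV_symbol l hp hf] at hle
  rcases hv : m.onV (Sum.inl ⟨p, hp⟩) with ⟨q, hq⟩ | x
  · rw [hv] at hle
    obtain ⟨g, hg⟩ := Option.isSome_iff_exists.mp hq
    rw [enc_lV_symbol s hq hg] at hle
    have hfg : (Sum.inl f : S ⊕ ℕ+) = Sum.inl g := hle
    obtain rfl : f = g := Sum.inl.inj hfg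
    exact ⟨q, hq, rfl, hg⟩
  · rw [hv] at hle
    exact absurd hle (fun hh => hh)

lemma maps_child {l s : Term S ar X} (m : GLHom l.enc s.enc) (p q : List ℕ) (i : ℕ)
    (hp : (l.symAt p).isSome) (hq : (s.symAt q).isSome)
    (hmv : m.onV (Sum.inl ⟨p, hp⟩) = Sum.inl ⟨q, hq⟩)
    (hw : ∃ f, l.symAt p = some f ∧ i < ar f) :
    (s.sub? (q ++ [i])).isSome ∧
    (∀ hc : (l.symAt (p ++ [i])).isSome,
      ∃ hc' : (s.symAt (q ++ [i])).isSome,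
        m.onV (Sum.inl ⟨p ++ [i], hc⟩) = Sum.inl ⟨q ++ [i], hc'⟩) := by
  obtain ⟨f, hf, hi⟩ := hw
  -- s has the same symbol at q
  have hsf : s.symAt q = some f := by
    obtain ⟨q₂, hq₂, hmv₂, hs₂⟩ := maps_symbol m p hp hf
    rw [hmv] at hmv₂
    have h1 : q = q₂ := inl_val_eq hmv₂
    rw [← h1] at hs₂
    exact hs₂
  set e : l.encE := ⟨(p, i), f, hf, hi⟩ with he
  rcases he' : m.onE e with ⟨⟨pe, ie⟩, we⟩
  -- edge label forces ie = i
  have hlE := m.lE_le e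
  rw [he'] at hlE
  have hlab : (Sum.inr ⟨i + 1, Nat.succ_pos _⟩ : S ⊕ ℕ+) =
      Sum.inr ⟨ie + 1, Nat.succ_pos _⟩ := hlE
  have hie : ie = i := by
    have h2 := congrArg Subtype.val (Sum.inr.inj hlab)
    simp only [PNat.mk_ofNat] at h2
    omega
  subst hie
  -- source forces pe = q
  have hsrc := m.src_comm e
  rw [he', show l.enc.src e = Sum.inl ⟨p, hp⟩ from rfl, hmv] at hsrc
  have hsrc'' : (Sum.inl (⟨pe, by obtain ⟨g, hg, _⟩ := we; simp [hg]⟩ :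
      {r : List ℕ // (s.symAt r).isSome}) : s.encV) = Sum.inl ⟨q, hq⟩ := hsrc
  have hpe : pe = q := inl_val_eq hsrc''
  subst hpe
  have htgt := m.tgt_comm e
  rw [he'] at htgt
  obtain ⟨u, hu⟩ := s.edge_sub?_isSome we
  refine ⟨by rw [hu]; rfl, ?_⟩
  intro hc
  obtain ⟨f', hf'⟩ := Option.isSome_iff_exists.mp hc
  obtain ⟨q₂, hq₂, hmv₂, hs₂⟩ := maps_symbol m (p ++ [ie]) hc hf'
  have hltgt : l.enc.tgt e = Sum.inl ⟨p ++ [ie], hc⟩ := by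
    show l.encTgt e = _
    unfold Term.encTgt
    exact dif_pos hc
  rw [hltgt, hmv₂] at htgt
  -- htgt : s.enc.tgt ⟨(q,i),we⟩ = Sum.inl ⟨q₂, hq₂⟩
  have htgt' : s.encTgt ⟨(pe, ie), we⟩ = Sum.inl ⟨q₂, hq₂⟩ := htgt
  unfold Term.encTgt at htgt'
  by_cases hsc : (s.symAt (pe ++ [ie])).isSome
  · simp only [hsc, ↓reduceDIte] at htgt'
    have h1 : pe ++ [ie] = q₂ := inl_val_eq htgt'
    exact ⟨hsc, by rw [hmv₂]; exact congrArg _ (Subtype.ext h1.symm)⟩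
  · simp only [hsc, ↓reduceDIte] at htgt'
    exact absurd ((dif_neg hsc).symm.trans htgt') (fun h => by cases h)

lemma main_lemma {l s : Term S ar X} (m : GLHom l.enc s.enc) (p0 : List ℕ)
    (σ : X → Term S ar X)
    (hσ : ∀ x p u, l.sub? p = some (Term.var x) → s.sub? (p0 ++ p) = some u → σ x = u) :
    ∀ (t : Term S ar X) (p : List ℕ), l.sub? p = some t →
      ((∃ x, t = Term.var x) → (s.sub? (p0 ++ p)).isSome) →
      ((∃ f ts, t = Term.app f ts) →
        ∃ (hp : (l.symAt p).isSome) (hq : (s.symAt (p0 ++ p)).isSome),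
          m.onV (Sum.inl ⟨p, hp⟩) = Sum.inl ⟨p0 ++ p, hq⟩) →
      s.sub? (p0 ++ p) = some (t.subst σ) := by
  intro t
  induction t with
  | var x =>
    intro p ht h1 _
    obtain ⟨u, hu⟩ := Option.isSome_iff_exists.mp (h1 ⟨x, rfl⟩)
    rw [hu]
    show _ = some (σ x)
    rw [hσ x p u ht hu]
  | app f ts ih =>
    intro p ht h1 h2
    obtain ⟨hp, hq, hmv⟩ := h2 ⟨f, ts, rfl⟩
    have hf : l.symAt p = some f := by unfold Term.symAt; rw [ht]; rfl
    have hsf : s.symAt (p0 ++ p) = some f := by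
      obtain ⟨q₂, hq₂, hmv₂, hs₂⟩ := maps_symbol m p hp hf
      rw [hmv] at hmv₂
      have hh : p0 ++ p = q₂ := inl_val_eq hmv₂
      rw [← hh] at hs₂
      exact hs₂
    obtain ⟨vs, hvs⟩ := s.symAt_sub hsf
    have hchild : ∀ i : Fin (ar f), vs i = (ts i).subst σ := by
      intro i
      have hcl : l.sub? (p ++ [i.1]) = some (ts i) := by
        rw [Term.sub?_append, ht]
        simp [Term.sub?, i.isLt]
      have hmc := maps_child m p (p0 ++ p) i.1 hp hq hmv ⟨f, hf, i.isLt⟩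
      have hIH : s.sub? (p0 ++ (p ++ [i.1])) = some ((ts i).subst σ) := by
        refine ih i (p ++ [i.1]) hcl ?_ ?_
        · intro _
          rw [← List.append_assoc]
          exact hmc.1
        · rintro ⟨g, us, hgu⟩
          have hcsym : (l.symAt (p ++ [i.1])).isSome := by
            unfold Term.symAt; rw [hcl, hgu]; rfl
          obtain ⟨hc', hmap⟩ := hmc.2 hcsym
          simp only [← List.append_assoc]
          exact ⟨hcsym, hc', hmap⟩
      have hsv : s.sub? ((p0 ++ p) ++ [i.1]) = some (vs i) := by
        rw [Term.sub?_append, hvs]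
        simp [Term.sub?, i.isLt]
      rw [← List.append_assoc] at hIH
      rw [hIH] at hsv
      exact (Option.some.inj hsv).symm
    rw [hvs]
    show _ = some (Term.app f fun i => (ts i).subst σ)
    congr 1
    exact congrArg _ (funext fun i => hchild i)

lemma exists_ctx : ∀ (p : List ℕ) (s t : Term S ar X), s.sub? p = some t →
    ∃ C : Ctx S ar X, C.holePos = p ∧ s = C.fill t := by
  intro p
  induction p with
  | nil =>
    intro s t h
    rw [sub?_nil] at h
    exact ⟨.hole, rfl, show s = t from Option.some.inj h⟩
  | cons i p ih =>
    intro s t h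
    cases s with
    | var x => exact absurd h (by simp [Term.sub?])
    | app f us =>
      by_cases hi : i < ar f
      · have h' : (us ⟨i, hi⟩).sub? p = some t := by
          have : Term.sub? (.app f us) (i :: p) = (us ⟨i, hi⟩).sub? p := by
            simp [Term.sub?, hi]
          rwa [this] at h
        obtain ⟨C, hC, hfill⟩ := ih _ _ h'
        refine ⟨.app f ⟨i, hi⟩ us C, by simp [Ctx.holePos, hC], ?_⟩
        show Term.app f us = .app f (Function.update us ⟨i, hi⟩ (C.fill t))
        rw [← hfill, Function.update_eq_self]
      · exact absurd h (by simp [Term.sub?, hi])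

end Proof3

/-- If `m : l° → s°` is a monomorphism (for linear terms `l, s`
with `l` not a variable), then `s = C[lσ]` for some context `C` and
substitution `σ`, and the position of `m(root(l°))` in `s°` is the position of
the hole of `C`. -/
theorem statement_3 {S : Type} {ar : S → ℕ} {X : Type}
    (l s : Term S ar X) (hl : l.Linear) (hlv : ∀ x, l ≠ Term.var x) (hs : s.Linear)
    (m : l.enc ⟶ s.enc) (hm : Mono m) :
    ∃ (C : Ctx S ar X) (σ : X → Term S ar X),
      s = C.fill (l.subst σ) ∧ s.encVertAt C.holePos (homV m l.encRoot) := by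
  let m' : GLHom l.enc s.enc := m
  -- root is a symbol vertex
  obtain ⟨f, hf⟩ : ∃ f, l.symAt [] = some f := by
    cases hlc : l with
    | var x => exact absurd hlc (hlv x)
    | app f ts => exact ⟨f, rfl⟩
  have hroot : (l.symAt []).isSome := by rw [hf]; rfl
  have henc : l.encRoot = Sum.inl ⟨[], hroot⟩ := dif_pos hroot
  obtain ⟨p0, hq0, hm0, hs0⟩ := maps_symbol m' [] hroot hf
  -- define the substitution
  set σ : X → Term S ar X := fun x =>
    if hx : x ∈ l.vars then (s.sub? (p0 ++ Classical.choose hx)).getD (Term.var x)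
    else Term.var x with hσdef
  have hσ : ∀ x p u, l.sub? p = some (Term.var x) → s.sub? (p0 ++ p) = some u → σ x = u := by
    intro x p u h1 h2
    have hx : x ∈ l.vars := ⟨p, h1⟩
    have hcp : Classical.choose hx = p := hl x (Classical.choose hx) p (Classical.choose_spec hx) h1
    rw [hσdef]
    simp only [dif_pos hx, hcp, h2, Option.getD_some]
  have hmain := main_lemma m' p0 σ hσ l [] (sub?_nil l)
    (by
      rintro ⟨x, hx⟩
      rw [hx] at hf
      exact absurd hf (by simp [Term.symAt, Term.sub?, Term.head?]))
    (by
      intro _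
      simp only [List.append_nil]
      exact ⟨hroot, hq0, hm0⟩)
  rw [List.append_nil] at hmain
  obtain ⟨C, hC, hfill⟩ := exists_ctx p0 s _ hmain
  refine ⟨C, σ, hfill, ?_⟩
  have : homV m l.encRoot = Sum.inl ⟨p0, hq0⟩ := by
    rw [henc]; exact hm0
  rw [this, hC]
  show p0 = p0
  rfl
end
end

section
/- Let R be a linear term rewriting system over a signature Σ. If the encoded system R° is terminating on all finite Σ°-labeled graphs (i.e., there is no infinite sequence G_0 ⇒_{R°} G_1 ⇒_{R°} ⋯ of PBPO+ rewrite steps on finite graphs), then R is terminating on terms Ter(Σ,X). -/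
open CategoryTheory
open Classical

noncomputable section

/-! ### Auxiliary development for statement 7 -/

namespace P7

open Term

variable {S : Type} {ar : S → ℕ} {X : Type}

attribute [local instance] Classical.propDecidable

lemma sub?_cons (f : S) (ts : Fin (ar f) → Term S ar X) (i : ℕ) (p : List ℕ) :
    (Term.app f ts).sub? (i :: p) = if h : i < ar f then (ts ⟨i, h⟩).sub? p else none := rfl

lemma symAt_def (u : Term S ar X) (p : List ℕ) : u.symAt p = (u.sub? p).bind Term.head? := rfl

lemma sub?_subst (σ : X → Term S ar X) :
    ∀ (p : List ℕ) (u w : Term S ar X), u.sub? p = some w →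
      (u.subst σ).sub? p = some (w.subst σ) := by
  intro p
  induction p with
  | nil => intro u w h; simp [Term.sub?] at h ⊢; exact congrArg _ h
  | cons i p ih =>
    intro u w h
    cases u with
    | var x => simp [Term.sub?] at h
    | app f ts =>
      rw [sub?_cons] at h
      by_cases hi : i < ar f
      · rw [dif_pos hi] at h
        show Term.sub? (.app f fun j => (ts j).subst σ) (i :: p) = _
        rw [sub?_cons, dif_pos hi]
        exact ih _ _ h
      · rw [dif_neg hi] at h; exact absurd h (by simp)

lemma isSome_sub?_subst (σ : X → Term S ar X) (p : List ℕ) (u : Term S ar X)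
    (h : (u.sub? p).isSome) : ((u.subst σ).sub? p).isSome := by
  obtain ⟨w, hw⟩ := Option.isSome_iff_exists.mp h
  rw [sub?_subst σ p u w hw]; rfl

lemma symAt_subst (σ : X → Term S ar X) {p : List ℕ} {u : Term S ar X} {f : S}
    (h : u.symAt p = some f) : (u.subst σ).symAt p = some f := by
  obtain ⟨ts, hts⟩ := u.symAt_sub h
  rw [symAt_def, sub?_subst σ p u _ hts]
  have : u.symAt p = some f := h
  rw [symAt_def, hts] at this
  simpa [Term.subst, Term.head?] using this

lemma fill_sub? (C : Ctx S ar X) (a : Term S ar X) (q : List ℕ) :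
    (C.fill a).sub? (C.holePos ++ q) = a.sub? q := by
  induction C with
  | hole => simp [Ctx.fill, Ctx.holePos]
  | app f i ts D ih =>
    show Term.sub? (.app f (Function.update ts i (D.fill a))) ((i : ℕ) :: (D.holePos ++ q)) = _
    rw [sub?_cons, dif_pos i.isLt]
    have : (⟨(i : ℕ), i.isLt⟩ : Fin (ar f)) = i := Fin.eta i i.isLt
    rw [this, Function.update_self]
    exact ih

lemma fill_outside (C : Ctx S ar X) (a b : Term S ar X) :
    ∀ (q : List ℕ), ¬ C.holePos <+: q →
      ((C.fill a).sub? q).isSome = ((C.fill b).sub? q).isSome ∧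
      (C.fill a).symAt q = (C.fill b).symAt q := by
  induction C with
  | hole => intro q h; exact absurd List.nil_prefix h
  | app f i ts D ih =>
    intro q h
    cases q with
    | nil => constructor <;> rfl
    | cons j q' =>
      show ((Term.app f (Function.update ts i (D.fill a))).sub? (j :: q')).isSome
          = ((Term.app f (Function.update ts i (D.fill b))).sub? (j :: q')).isSome ∧
          (Term.app f (Function.update ts i (D.fill a))).symAt (j :: q')
          = (Term.app f (Function.update ts i (D.fill b))).symAt (j :: q')
      have hs : ∀ (c : Term S ar X),
          (Term.app f (Function.update ts i (D.fill c))).symAt (j :: q')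
          = ((Term.app f (Function.update ts i (D.fill c))).sub? (j :: q')).bind Term.head? :=
        fun c => rfl
      rw [hs a, hs b, sub?_cons, sub?_cons]
      by_cases hj : j < ar f
      · rw [dif_pos hj, dif_pos hj]
        by_cases hij : (⟨j, hj⟩ : Fin (ar f)) = i
        · subst hij
          rw [Function.update_self, Function.update_self]
          have hd : ¬ D.holePos <+: q' := by
            intro hpre
            exact h (show _ <+: _ from List.cons_prefix_cons.mpr ⟨rfl, hpre⟩)
          have := ih q' hd
          rw [symAt_def, symAt_def] at this
          exact this
        · rw [Function.update_of_ne hij, Function.update_of_ne hij]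
          exact ⟨rfl, rfl⟩
      · rw [dif_neg hj, dif_neg hj]; exact ⟨rfl, rfl⟩

lemma dicho (σ : X → Term S ar X) :
    ∀ (q : List ℕ) (u : Term S ar X), ((u.subst σ).sub? q).isSome →
      (u.symAt q).isSome ∨ ∃ x p q', q = p ++ q' ∧ u.sub? p = some (.var x) := by
  intro q
  induction q with
  | nil =>
    intro u _
    cases u with
    | var x => exact Or.inr ⟨x, [], [], rfl, by simp [Term.sub?]⟩
    | app f ts => exact Or.inl (by simp [Term.symAt, Term.sub?, Term.head?])
  | cons i q' ih =>
    intro u h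
    cases u with
    | var x => exact Or.inr ⟨x, [], i :: q', rfl, by simp [Term.sub?]⟩
    | app f ts =>
      have h' : ((Term.app f fun j => (ts j).subst σ).sub? (i :: q')).isSome := h
      rw [sub?_cons] at h'
      by_cases hi : i < ar f
      · rw [dif_pos hi] at h'
        rcases ih (ts ⟨i, hi⟩) h' with hl | ⟨x, p, q'', he, hv⟩
        · left
          rw [symAt_def, sub?_cons, dif_pos hi]
          exact hl
        · right
          exact ⟨x, i :: p, q'', by simp [he], by rw [sub?_cons, dif_pos hi]; exact hv⟩
      · rw [dif_neg hi] at h'; exact absurd h' (by simp)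

lemma symAt_of_leaf {u : Term S ar X} {p q : List ℕ} {x : X}
    (h : u.sub? p = some (.var x)) (hs : (u.symAt (p ++ q)).isSome) : False := by
  rw [symAt_def, sub?_append, h] at hs
  cases q with
  | nil => simp [Term.sub?, Term.head?] at hs
  | cons j q' => simp [Term.sub?] at hs

lemma leaf_prefix_eq {u : Term S ar X} {p1 p2 : List ℕ} {x y : X}
    (h1 : u.sub? p1 = some (.var x)) (h2 : u.sub? p2 = some (.var y))
    (hp : p1 <+: p2) : p1 = p2 := by
  obtain ⟨d, rfl⟩ := hp
  rw [sub?_append, h1] at h2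
  cases d with
  | nil => simp
  | cons j d' => simp [Term.sub?] at h2

lemma leaf_decomp_unique {u : Term S ar X} {p1 p2 q1 q2 : List ℕ} {x y : X}
    (h1 : u.sub? p1 = some (.var x)) (h2 : u.sub? p2 = some (.var y))
    (he : p1 ++ q1 = p2 ++ q2) : p1 = p2 ∧ x = y ∧ q1 = q2 := by
  have hcomp : p1 <+: p2 ∨ p2 <+: p1 :=
    List.prefix_or_prefix_of_prefix (⟨q1, rfl⟩ : p1 <+: p1 ++ q1) (⟨q2, he.symm⟩)
  have hpp : p1 = p2 := by
    rcases hcomp with hc | hc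
    · exact leaf_prefix_eq h1 h2 hc
    · exact (leaf_prefix_eq h2 h1 hc).symm
  subst hpp
  rw [h1] at h2
  refine ⟨rfl, by simpa using (Option.some.inj h2), List.append_cancel_left he⟩

/-- Per-occurrence (tree) encoding of an arbitrary term. -/
lemma edge_src_isSome {u : Term S ar X} {p : List ℕ} {i : ℕ}
    (h : (u.sub? (p ++ [i])).isSome) : (u.sub? p).isSome := by
  rw [sub?_append] at h
  cases hs : u.sub? p with
  | none => rw [hs] at h; simp at h
  | some w => rfl

noncomputable def TG (u : Term S ar X) : LGraph (FlatL S) where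
  V := {p : List ℕ // (u.sub? p).isSome}
  E := {pi : List ℕ × ℕ // (u.sub? (pi.1 ++ [pi.2])).isSome}
  src e := ⟨e.1.1, edge_src_isSome e.2⟩
  tgt e := ⟨e.1.1 ++ [e.1.2], e.2⟩
  lV v := (u.symAt v.1).elim Flat.bot (fun f => Flat.el (Sum.inl f))
  lE e := Flat.el (Sum.inr ⟨e.1.2 + 1, Nat.succ_pos _⟩)

noncomputable def posList : Term S ar X → List (List ℕ)
  | .var _ => [[]]
  | .app f ts =>
      [] :: (List.finRange (ar f)).flatMap (fun i => (posList (ts i)).map (fun p => (i : ℕ) :: p))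

lemma mem_posList : ∀ (u : Term S ar X) (p : List ℕ), (u.sub? p).isSome → p ∈ posList u := by
  intro u
  induction u with
  | var x =>
    intro p h
    cases p with
    | nil => simp [posList]
    | cons i p' => simp [Term.sub?] at h
  | app f ts ih =>
    intro p h
    cases p with
    | nil => simp [posList]
    | cons i p' =>
      rw [sub?_cons] at h
      by_cases hi : i < ar f
      · rw [dif_pos hi] at h
        have := ih ⟨i, hi⟩ p' h
        simp only [posList, List.mem_cons, List.mem_flatMap, List.mem_map]
        exact Or.inr ⟨⟨i, hi⟩, List.mem_finRange _, p', this, rfl⟩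
      · rw [dif_neg hi] at h; simp at h

lemma append_singleton_inj {p q : List ℕ} {i j : ℕ} (h : p ++ [i] = q ++ [j]) :
    p = q ∧ i = j := by
  have := congrArg List.reverse h
  simp only [List.reverse_append, List.reverse_cons, List.reverse_nil, List.nil_append,
    List.singleton_append, List.cons.injEq] at this
  exact ⟨by simpa using congrArg List.reverse this.2, this.1⟩

lemma TG_finite (u : Term S ar X) : FiniteG (TG u) := by
  have hV : Finite (TG u).V := by
    have hfin : Finite {p : List ℕ // p ∈ posList u} :=
      Set.Finite.to_subtype (posList u).finite_toSet
    apply Finite.of_injective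
      (fun v : (TG u).V => (⟨v.1, mem_posList u v.1 v.2⟩ : {p : List ℕ // p ∈ posList u}))
      (fun v w hvw => Subtype.ext (by simpa using congrArg Subtype.val hvw))
  refine ⟨hV, ?_⟩
  exact @Finite.of_injective _ _ hV
    (fun e : (TG u).E => (⟨e.1.1 ++ [e.1.2], e.2⟩ : (TG u).V))
    (fun e e' h => by
      have := append_singleton_inj (by simpa using congrArg Subtype.val h)
      exact Subtype.ext (Prod.ext this.1 this.2))


section Classify

variable (C : Ctx S ar X) (σ : X → Term S ar X)

/-- Classification of a position of `C.fill (u.subst σ)` relative to the pattern `u`. -/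
inductive PosCls (u : Term S ar X) (c q : List ℕ) : Type where
  | ctx (h : ¬ c <+: q)
  | pat (p : List ℕ) (hsym : (u.symAt p).isSome) (he : q = c ++ p)
  | vsub (x : X) (p q' : List ℕ) (hv : u.sub? p = some (.var x)) (he : q = c ++ p ++ q')

lemma prefix_eq_append {c q : List ℕ} (h : c <+: q) : q = c ++ q.drop c.length := by
  obtain ⟨d, rfl⟩ := h
  simp

noncomputable def classify (u : Term S ar X) (q : List ℕ)
    (hq : ((C.fill (u.subst σ)).sub? q).isSome) : PosCls u C.holePos q :=
  if h : C.holePos <+: q then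
    have he : q = C.holePos ++ q.drop C.holePos.length := prefix_eq_append h
    have hq₀ : ((u.subst σ).sub? (q.drop C.holePos.length)).isSome := by
      rw [he, fill_sub?] at hq; exact hq
    if h2 : (u.symAt (q.drop C.holePos.length)).isSome then .pat _ h2 he
    else
      have hd := (dicho σ _ u hq₀).resolve_left h2
      .vsub hd.choose hd.choose_spec.choose hd.choose_spec.choose_spec.choose
        hd.choose_spec.choose_spec.choose_spec.2
        (he.trans (by
          rw [List.append_assoc]
          exact congrArg (C.holePos ++ ·) hd.choose_spec.choose_spec.choose_spec.1))
  else .ctx h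

variable {C σ}

lemma classify_ctx {u : Term S ar X} {q : List ℕ} (hq) (h : ¬ C.holePos <+: q) :
    classify C σ u q hq = .ctx h := by
  rcases hc : classify C σ u q hq with ⟨h2⟩ | ⟨p2, hs2, he2⟩ | ⟨x2, p2, q2', hv2, he2⟩
  · rfl
  · exact absurd ⟨p2, he2.symm⟩ h
  · exact absurd ⟨p2 ++ q2', by rw [← List.append_assoc, ← he2]⟩ h

lemma classify_pat {u : Term S ar X} {q : List ℕ} (hq) {p : List ℕ}
    (hsym : (u.symAt p).isSome) (he : q = C.holePos ++ p) :
    classify C σ u q hq = .pat p hsym he := by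
  rcases hc : classify C σ u q hq with ⟨h2⟩ | ⟨p2, hs2, he2⟩ | ⟨x2, p2, q2', hv2, he2⟩
  · exact absurd ⟨p, he.symm⟩ h2
  · have : p2 = p := List.append_cancel_left (he2.symm.trans he)
    subst this; exact hc ▸ rfl
  · exfalso
    have hpp : p = p2 ++ q2' := by
      have := he.symm.trans he2
      rw [List.append_assoc] at this
      exact List.append_cancel_left this
    exact symAt_of_leaf hv2 (hpp ▸ hsym)

lemma classify_vsub {u : Term S ar X} {q : List ℕ} (hq) {x : X} {p q' : List ℕ}
    (hv : u.sub? p = some (.var x)) (he : q = C.holePos ++ p ++ q') :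
    classify C σ u q hq = .vsub x p q' hv he := by
  rcases hc : classify C σ u q hq with ⟨h2⟩ | ⟨p2, hs2, he2⟩ | ⟨x2, p2, q2', hv2, he2⟩
  · exact absurd ⟨p ++ q', by rw [← List.append_assoc, ← he]⟩ h2
  · exfalso
    have hpp : p2 = p ++ q' := by
      have := he2.symm.trans he
      rw [List.append_assoc] at this
      exact List.append_cancel_left this
    exact symAt_of_leaf hv (hpp ▸ hs2)
  · have hdec : p2 ++ q2' = p ++ q' := by
      have := he2.symm.trans he
      rw [List.append_assoc, List.append_assoc] at this
      exact List.append_cancel_left this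
    obtain ⟨hp, hx, hq'⟩ := leaf_decomp_unique hv2 hv hdec
    subst hp; subst hx; subst hq'
    exact hc ▸ rfl

end Classify

section PatHom

variable (C : Ctx S ar X) (σ : X → Term S ar X)

lemma isSome_of_symAt {u : Term S ar X} {p : List ℕ} (h : (u.symAt p).isSome) :
    (u.sub? p).isSome := by
  rw [symAt_def] at h
  cases hs : u.sub? p with
  | none => rw [hs] at h; simp at h
  | some w => rfl

lemma fill_pat_isSome {u : Term S ar X} {p : List ℕ} (h : (u.sub? p).isSome) :
    ((C.fill (u.subst σ)).sub? (C.holePos ++ p)).isSome := by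
  rw [fill_sub?]; exact isSome_sub?_subst σ p u h

lemma symAt_fill_pat {u : Term S ar X} {p : List ℕ} {f : S} (h : u.symAt p = some f) :
    (C.fill (u.subst σ)).symAt (C.holePos ++ p) = some f := by
  rw [symAt_def, fill_sub?]; exact symAt_subst σ h

lemma fill_sub_sub? {u : Term S ar X} {x : X} {p : List ℕ} (hv : u.sub? p = some (.var x))
    (q' : List ℕ) :
    (C.fill (u.subst σ)).sub? (C.holePos ++ p ++ q') = (σ x).sub? q' := by
  rw [List.append_assoc, fill_sub?, sub?_append, sub?_subst σ p u _ hv]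
  rfl

lemma symAt_fill_sub {u : Term S ar X} {x : X} {p : List ℕ} (hv : u.sub? p = some (.var x))
    (q' : List ℕ) :
    (C.fill (u.subst σ)).symAt (C.holePos ++ p ++ q') = (σ x).symAt q' := by
  rw [symAt_def, fill_sub_sub? C σ hv q']; rfl

noncomputable def patHomV (u : Term S ar X) : u.encV → (TG (C.fill (u.subst σ))).V
  | Sum.inl pp => ⟨C.holePos ++ pp.1, fill_pat_isSome C σ (isSome_of_symAt pp.2)⟩
  | Sum.inr xx => ⟨C.holePos ++ xx.2.choose,
      fill_pat_isSome C σ (by rw [xx.2.choose_spec]; rfl)⟩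

noncomputable def patHomE (u : Term S ar X) : u.encE → (TG (C.fill (u.subst σ))).E :=
  fun e => ⟨(C.holePos ++ e.1.1, e.1.2), by
    rw [List.append_assoc]
    obtain ⟨s, hs⟩ := Term.edge_sub?_isSome u e.2
    exact fill_pat_isSome C σ (by rw [hs]; rfl)⟩

lemma TG_lV_eq {u : Term S ar X} (v : (TG u).V) :
    (TG u).lV v = (u.symAt v.1).elim Flat.bot (fun f => Flat.el (Sum.inl f)) := rfl

noncomputable def patHom (u : Term S ar X) (hu : u.Linear) :
    GLHom u.enc (TG (C.fill (u.subst σ))) where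
  onV := patHomV C σ u
  onE := patHomE C σ u
  src_comm := fun e => Subtype.ext rfl
  tgt_comm := fun e => by
    show (⟨(C.holePos ++ e.1.1) ++ [e.1.2], _⟩ : (TG _).V) = patHomV C σ u (u.encTgt e)
    unfold Term.encTgt
    by_cases h : (u.symAt (e.1.1 ++ [e.1.2])).isSome
    · erw [dif_pos h]
      exact Subtype.ext (List.append_assoc _ _ _)
    · erw [dif_neg h]
      apply Subtype.ext
      show (C.holePos ++ e.1.1) ++ [e.1.2] = C.holePos ++ _
      rw [List.append_assoc]
      congr 1
      have hM : (Classical.choose (u.edge_tgt_var e.2 h)) ∈ u.vars :=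
        ⟨e.1.1 ++ [e.1.2], Classical.choose_spec (u.edge_tgt_var e.2 h)⟩
      exact hu _ _ _ (Classical.choose_spec (u.edge_tgt_var e.2 h)) hM.choose_spec
  lV_le := fun v => by
    cases v with
    | inl pp =>
      show ((u.symAt pp.1).elim Flat.bot fun f => Flat.el (Sum.inl f)) ≤
        ((C.fill (u.subst σ)).symAt (C.holePos ++ pp.1)).elim Flat.bot
          (fun f => Flat.el (Sum.inl f))
      cases hsym : u.symAt pp.1 with
      | none => exact Flat.bot_le _
      | some f => rw [symAt_fill_pat C σ hsym]
    | inr xx => exact Flat.bot_le _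
  lE_le := fun e => le_refl _

lemma patHomV_inj {u : Term S ar X} (hu : u.Linear) : Function.Injective (patHomV C σ u) := by
  intro v w hvw
  have hvw' : (patHomV C σ u v).1 = (patHomV C σ u w).1 := congrArg Subtype.val hvw
  cases v with
  | inl pp =>
    cases w with
    | inl qq =>
      have : pp.1 = qq.1 := List.append_cancel_left hvw'
      cases pp; cases qq; cases this; rfl
    | inr xx =>
      exfalso
      have : pp.1 = xx.2.choose := List.append_cancel_left hvw'
      exact symAt_of_leaf (u := u) (q := []) xx.2.choose_spec
        (by rw [List.append_nil, ← this]; exact pp.2)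
  | inr xx =>
    cases w with
    | inl qq =>
      exfalso
      have : qq.1 = xx.2.choose := (List.append_cancel_left hvw').symm
      exact symAt_of_leaf (u := u) (q := []) xx.2.choose_spec
        (by rw [List.append_nil, ← this]; exact qq.2)
    | inr yy =>
      have hpos : xx.2.choose = yy.2.choose := List.append_cancel_left hvw'
      have h1 := xx.2.choose_spec
      have h2 := yy.2.choose_spec
      rw [hpos, h2] at h1
      have : yy.1 = xx.1 := by simpa using Option.some.inj h1
      cases xx; cases yy; cases this; rfl

lemma patHomE_inj (u : Term S ar X) : Function.Injective (patHomE C σ u) := by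
  intro e e' h
  have h' : (C.holePos ++ e.1.1, e.1.2) = (C.holePos ++ e'.1.1, e'.1.2) :=
    congrArg Subtype.val h
  have hfst : C.holePos ++ e.1.1 = C.holePos ++ e'.1.1 := by
    have := congrArg Prod.fst h'; simpa using this
  have h1 : e.1.1 = e'.1.1 := List.append_cancel_left hfst
  have h2 : e.1.2 = e'.1.2 := by
    have := congrArg Prod.snd h'; simpa using this
  exact Subtype.ext (Prod.ext_iff.mpr ⟨h1, h2⟩)

lemma mono_of_injective {G H : LGraph (FlatL S)} (f : G ⟶ H)
    (hV : Function.Injective (GLHom.onV f)) (hE : Function.Injective (GLHom.onE f)) :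
    Mono f := by
  refine ⟨fun {Z} g h w => ?_⟩
  refine GLHom.ext' (funext fun v => hV ?_) (funext fun e => hE ?_)
  · exact congrFun (congrArg GLHom.onV w) v
  · exact congrFun (congrArg GLHom.onE w) e

end PatHom


section Alpha

variable (ρ : TRSRule S ar X) (C : Ctx S ar X) (σ : X → Term S ar X)

lemma lhs_symAt_nil : (ρ.lhs.symAt []).isSome := by
  cases hl : ρ.lhs with
  | var x => exact absurd hl (ρ.lhs_not_var x)
  | app f ts => simp [Term.symAt, Term.sub?, Term.head?]

lemma encRoot_lhs : ρ.lhs.encRoot = Sum.inl ⟨[], lhs_symAt_nil ρ⟩ := by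
  unfold Term.encRoot
  erw [dif_pos (lhs_symAt_nil ρ)]

/-- A variable head of `lhs.enc`, as an element of `varHeads`. -/
def vhd {x : X} {p : List ℕ} (hv : ρ.lhs.sub? p = some (.var x)) : ↥(ρ.lhs.varHeads) :=
  ⟨Sum.inr ⟨x, ⟨p, hv⟩⟩, ⟨⟨x, ⟨p, hv⟩⟩, rfl⟩⟩

noncomputable def alphaV :
    (TG (C.fill (ρ.lhs.subst σ))).V → (ctxCC ρ.lhs.enc ρ.lhs.encRoot ρ.lhs.varHeads).V :=
  fun v =>
    match classify C σ ρ.lhs v.1 v.2 with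
    | .ctx _ => Sum.inr ()
    | .pat p hsym _ => Sum.inl (Sum.inl (Sum.inl ⟨p, hsym⟩))
    | .vsub x p q' hv _ =>
        match q' with
        | [] => Sum.inl (Sum.inl (Sum.inr ⟨x, ⟨p, hv⟩⟩))
        | _ :: _ => Sum.inl (Sum.inr (vhd ρ hv))

lemma pat_edge {u : Term S ar X} {p : List ℕ} {i : ℕ} (hsym : (u.symAt p).isSome)
    (h : ((C.fill (u.subst σ)).sub? ((C.holePos ++ p) ++ [i])).isSome) :
    ∃ f, u.symAt p = some f ∧ i < ar f := by
  obtain ⟨f, hf⟩ := Option.isSome_iff_exists.mp hsym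
  obtain ⟨ts, hts⟩ := u.symAt_sub hf
  rw [List.append_assoc, fill_sub?, sub?_append, sub?_subst σ p u _ hts] at h
  refine ⟨f, hf, ?_⟩
  by_contra hi
  have : (Term.app f (fun j => (ts j).subst σ)).sub? [i] = none := by
    rw [show ([i] : List ℕ) = i :: [] from rfl, sub?_cons, dif_neg hi]
  rw [show (Option.bind (some ((Term.app f ts).subst σ))
      fun s => s.sub? [i]) = (Term.app f (fun j => (ts j).subst σ)).sub? [i] from rfl, this] at h
  simp at h

noncomputable def alphaE :
    (TG (C.fill (ρ.lhs.subst σ))).E → (ctxCC ρ.lhs.enc ρ.lhs.encRoot ρ.lhs.varHeads).E :=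
  fun e =>
    match classify C σ ρ.lhs e.1.1 (edge_src_isSome e.2) with
    | .ctx _ => if e.1.1 ++ [e.1.2] = C.holePos then Sum.inr true else Sum.inr false
    | .pat p hsym he => Sum.inl (Sum.inl ⟨(p, e.1.2), pat_edge C σ hsym (he ▸ e.2)⟩)
    | .vsub x p q' hv _ =>
        match q' with
        | [] => Sum.inl (Sum.inr (Sum.inl (vhd ρ hv)))
        | _ :: _ => Sum.inl (Sum.inr (Sum.inr (vhd ρ hv)))

variable {ρ C σ}

/- Evaluation lemmas. -/
lemma alphaV_ctx {q hq} {h} (hcl : classify C σ ρ.lhs q hq = .ctx h) :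
    alphaV ρ C σ ⟨q, hq⟩ = Sum.inr () := by
  unfold alphaV; rw [hcl]

lemma alphaV_pat {q hq} {p hsym he} (hcl : classify C σ ρ.lhs q hq = .pat p hsym he) :
    alphaV ρ C σ ⟨q, hq⟩ = Sum.inl (Sum.inl (Sum.inl ⟨p, hsym⟩)) := by
  unfold alphaV; rw [hcl]; rfl

lemma alphaV_vhead {q hq} {x p hv he} (hcl : classify C σ ρ.lhs q hq = .vsub x p [] hv he) :
    alphaV ρ C σ ⟨q, hq⟩ = Sum.inl (Sum.inl (Sum.inr ⟨x, ⟨p, hv⟩⟩)) := by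
  unfold alphaV; rw [hcl]; rfl

lemma alphaV_prime {q hq} {x p j q' hv he}
    (hcl : classify C σ ρ.lhs q hq = .vsub x p (j :: q') hv he) :
    alphaV ρ C σ ⟨q, hq⟩ = Sum.inl (Sum.inr (vhd ρ hv)) := by
  unfold alphaV; rw [hcl]; rfl

lemma alphaE_ctx {e : (TG (C.fill (ρ.lhs.subst σ))).E} {h}
    (hcl : classify C σ ρ.lhs e.1.1 (edge_src_isSome e.2) = .ctx h) :
    alphaE ρ C σ e = if e.1.1 ++ [e.1.2] = C.holePos then Sum.inr true else Sum.inr false := by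
  unfold alphaE; rw [hcl]; rfl

lemma alphaE_pat {e : (TG (C.fill (ρ.lhs.subst σ))).E} {p hsym he}
    (hcl : classify C σ ρ.lhs e.1.1 (edge_src_isSome e.2) = .pat p hsym he) :
    alphaE ρ C σ e = Sum.inl (Sum.inl ⟨(p, e.1.2), pat_edge C σ hsym (he ▸ e.2)⟩) := by
  unfold alphaE; rw [hcl]; rfl

lemma alphaE_vhead {e : (TG (C.fill (ρ.lhs.subst σ))).E} {x p hv he}
    (hcl : classify C σ ρ.lhs e.1.1 (edge_src_isSome e.2) = .vsub x p [] hv he) :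
    alphaE ρ C σ e = Sum.inl (Sum.inr (Sum.inl (vhd ρ hv))) := by
  unfold alphaE; rw [hcl]; rfl

lemma alphaE_prime {e : (TG (C.fill (ρ.lhs.subst σ))).E} {x p j q' hv he}
    (hcl : classify C σ ρ.lhs e.1.1 (edge_src_isSome e.2) = .vsub x p (j :: q') hv he) :
    alphaE ρ C σ e = Sum.inl (Sum.inr (Sum.inr (vhd ρ hv))) := by
  unfold alphaE; rw [hcl]; rfl

lemma not_prefix_snoc {c q : List ℕ} {i : ℕ} (h : ¬ c <+: q) (hne : q ++ [i] ≠ c) :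
    ¬ c <+: q ++ [i] :=
  fun hc => (List.prefix_concat_iff.mp hc).elim (fun he => hne he.symm) h

variable (ρ C σ)

noncomputable def alpha (hl : ρ.lhs.Linear) :
    GLHom (TG (C.fill (ρ.lhs.subst σ))) (ctxCC ρ.lhs.enc ρ.lhs.encRoot ρ.lhs.varHeads) where
  onV := alphaV ρ C σ
  onE := alphaE ρ C σ
  src_comm := fun e => by
    have hsrc : (TG (C.fill (ρ.lhs.subst σ))).src e = ⟨e.1.1, edge_src_isSome e.2⟩ := rfl
    rw [hsrc]
    rcases hcl : classify C σ ρ.lhs e.1.1 (edge_src_isSome e.2) with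
      ⟨h⟩ | ⟨p, hsym, he⟩ | ⟨x, p, q', hv, he⟩
    · rw [alphaE_ctx hcl, alphaV_ctx hcl]
      split <;> rfl
    · rw [alphaE_pat hcl, alphaV_pat hcl]; rfl
    · cases q' with
      | nil => rw [alphaE_vhead hcl, alphaV_vhead hcl]; rfl
      | cons j q'' => rw [alphaE_prime hcl, alphaV_prime hcl]; rfl
  tgt_comm := fun e => by
    have htgt : (TG (C.fill (ρ.lhs.subst σ))).tgt e = ⟨e.1.1 ++ [e.1.2], e.2⟩ := rfl
    rw [htgt]
    rcases hcl : classify C σ ρ.lhs e.1.1 (edge_src_isSome e.2) with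
      ⟨h⟩ | ⟨p, hsym, he⟩ | ⟨x, p, q', hv, he⟩
    · rw [alphaE_ctx hcl]
      by_cases hc : e.1.1 ++ [e.1.2] = C.holePos
      · rw [if_pos hc]
        have hcl2 : classify C σ ρ.lhs (e.1.1 ++ [e.1.2]) e.2
            = .pat [] (lhs_symAt_nil ρ) (by rw [hc, List.append_nil]) :=
          classify_pat _ _ _
        rw [alphaV_pat hcl2]
        show Sum.inl (Sum.inl ρ.lhs.encRoot) = _
        rw [encRoot_lhs]; rfl
      · rw [if_neg hc]
        have hcl2 : classify C σ ρ.lhs (e.1.1 ++ [e.1.2]) e.2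
            = .ctx (not_prefix_snoc h hc) := classify_ctx _ _
        rw [alphaV_ctx hcl2]
        rfl
    · rw [alphaE_pat hcl]
      show Sum.inl (Sum.inl (ρ.lhs.encTgt _)) = _
      unfold Term.encTgt
      by_cases hs : (ρ.lhs.symAt (p ++ [e.1.2])).isSome
      · erw [dif_pos hs]
        have hcl2 : classify C σ ρ.lhs (e.1.1 ++ [e.1.2]) e.2
            = .pat (p ++ [e.1.2]) hs (by rw [he, List.append_assoc]) := classify_pat _ _ _
        rw [alphaV_pat hcl2]; rfl
      · erw [dif_neg hs]
        have hv2 := Classical.choose_spec (ρ.lhs.edge_tgt_var (pat_edge C σ hsym (he ▸ e.2)) hs)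
        have hcl2 : classify C σ ρ.lhs (e.1.1 ++ [e.1.2]) e.2
            = .vsub _ (p ++ [e.1.2]) [] hv2
              (by rw [he, List.append_assoc, List.append_nil]) := classify_vsub _ _ _
        rw [alphaV_vhead hcl2]; rfl
    · cases q' with
      | nil =>
        rw [alphaE_vhead hcl]
        have hcl2 : classify C σ ρ.lhs (e.1.1 ++ [e.1.2]) e.2
            = .vsub x p [e.1.2] hv
              (by rw [he, List.append_nil]) := classify_vsub _ _ _
        rw [alphaV_prime hcl2]
        rfl
      | cons j q'' =>
        rw [alphaE_prime hcl]
        have hcl2 : classify C σ ρ.lhs (e.1.1 ++ [e.1.2]) e.2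
            = .vsub x p ((j :: q'') ++ [e.1.2]) hv
              (by rw [he, List.append_assoc]) := classify_vsub _ _ _
        rw [alphaV_prime hcl2]
        rfl
  lV_le := fun v => by
    rcases hcl : classify C σ ρ.lhs v.1 v.2 with
      ⟨h⟩ | ⟨p, hsym, he⟩ | ⟨x, p, q', hv, he⟩
    · rw [show v = (⟨v.1, v.2⟩ : (TG _).V) from rfl, alphaV_ctx hcl]
      exact Flat.le_top _
    · rw [show v = (⟨v.1, v.2⟩ : (TG _).V) from rfl, alphaV_pat hcl]
      obtain ⟨f, hf⟩ := Option.isSome_iff_exists.mp hsym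
      show ((C.fill (ρ.lhs.subst σ)).symAt v.1).elim Flat.bot _ ≤
        (ctxCC ρ.lhs.enc ρ.lhs.encRoot ρ.lhs.varHeads).lV (Sum.inl (Sum.inl (Sum.inl ⟨p, hsym⟩)))
      erw [ctxCC_lV_inl, if_neg (by rintro ⟨y, hy⟩; cases hy)]
      show _ ≤ (ρ.lhs.symAt p).elim Flat.bot _
      rw [he, symAt_fill_pat C σ hf, hf]
    · cases q' with
      | nil =>
        rw [show v = (⟨v.1, v.2⟩ : (TG _).V) from rfl, alphaV_vhead hcl]
        show _ ≤ (ctxCC ρ.lhs.enc ρ.lhs.encRoot ρ.lhs.varHeads).lV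
          (Sum.inl (Sum.inl (Sum.inr ⟨x, ⟨p, hv⟩⟩)))
        erw [ctxCC_lV_inl, if_pos ⟨⟨x, ⟨p, hv⟩⟩, rfl⟩]
        exact Flat.le_top _
      | cons j q'' =>
        rw [show v = (⟨v.1, v.2⟩ : (TG _).V) from rfl, alphaV_prime hcl]
        exact Flat.le_top _
  lE_le := fun e => by
    rcases hcl : classify C σ ρ.lhs e.1.1 (edge_src_isSome e.2) with
      ⟨h⟩ | ⟨p, hsym, he⟩ | ⟨x, p, q', hv, he⟩
    · rw [alphaE_ctx hcl]; split <;> exact Flat.le_top _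
    · rw [alphaE_pat hcl]; exact le_refl _
    · cases q' with
      | nil => rw [alphaE_vhead hcl]; exact Flat.le_top _
      | cons j q'' => rw [alphaE_prime hcl]; exact Flat.le_top _

end Alpha


section MatchPB

variable (ρ : TRSRule S ar X) (C : Ctx S ar X) (σ : X → Term S ar X)

open CategoryTheory

/-- The match morphism, as a hom in the category. -/
noncomputable def mMatch (hl : ρ.lhs.Linear) : (ruleEnc ρ).L ⟶ TG (C.fill (ρ.lhs.subst σ)) :=
  (patHom C σ ρ.lhs hl : GLHom ρ.lhs.enc _)

/-- The adherence morphism, as a hom in the category. -/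
noncomputable def aMatch (hl : ρ.lhs.Linear) : TG (C.fill (ρ.lhs.subst σ)) ⟶ (ruleEnc ρ).L' :=
  (alpha ρ C σ hl : GLHom _ (ctxCC ρ.lhs.enc ρ.lhs.encRoot ρ.lhs.varHeads))

lemma m_alpha (hl : ρ.lhs.Linear) :
    mMatch ρ C σ hl ≫ aMatch ρ C σ hl = (ruleEnc ρ).tL := by
  refine GLHom.ext' (funext fun v => ?_) (funext fun e => ?_)
  · cases v with
    | inl pp =>
      exact alphaV_pat (classify_pat (fill_pat_isSome C σ (isSome_of_symAt pp.2)) pp.2 rfl)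
    | inr xx =>
      exact alphaV_vhead (classify_vsub _ xx.2.choose_spec (by rw [List.append_nil]))
  · obtain ⟨f, hf, hi⟩ := e.2
    exact alphaE_pat (classify_pat _ (by rw [hf]; rfl) rfl)

lemma alpha_pullback_V (hl : ρ.lhs.Linear) (a : ρ.lhs.encV)
    (w : (TG (C.fill (ρ.lhs.subst σ))).V)
    (hcond : (Sum.inl (Sum.inl a) : (ctxCC ρ.lhs.enc ρ.lhs.encRoot ρ.lhs.varHeads).V)
      = alphaV ρ C σ w) :
    patHomV C σ ρ.lhs a = w := by
  obtain ⟨q, hq⟩ := w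
  rcases hcl : classify C σ ρ.lhs q hq with ⟨h⟩ | ⟨p, hsym, he⟩ | ⟨x, p, q', hv, he⟩
  · rw [alphaV_ctx hcl] at hcond; exact absurd hcond (by simp)
  · rw [alphaV_pat hcl] at hcond
    have ha : a = Sum.inl ⟨p, hsym⟩ := by
      injection hcond with h1; injection h1 with h2
    subst ha
    exact Subtype.ext he.symm
  · cases q' with
    | nil =>
      rw [alphaV_vhead hcl] at hcond
      have ha : a = Sum.inr ⟨x, ⟨p, hv⟩⟩ := by
        injection hcond with h1; injection h1 with h2
      subst ha
      apply Subtype.ext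
      have hmem : x ∈ ρ.lhs.vars := ⟨p, hv⟩
      show C.holePos ++ hmem.choose = q
      rw [hl x _ p hmem.choose_spec hv, he, List.append_nil]
    | cons j q'' =>
      rw [alphaV_prime hcl] at hcond
      exact absurd hcond (by intro h; cases h)

lemma alpha_pullback_E (hl : ρ.lhs.Linear) (a : ρ.lhs.encE)
    (w : (TG (C.fill (ρ.lhs.subst σ))).E)
    (hcond : (Sum.inl (Sum.inl a) : (ctxCC ρ.lhs.enc ρ.lhs.encRoot ρ.lhs.varHeads).E)
      = alphaE ρ C σ w) :
    patHomE C σ ρ.lhs a = w := by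
  rcases hcl : classify C σ ρ.lhs w.1.1 (edge_src_isSome w.2) with
    ⟨h⟩ | ⟨p, hsym, he⟩ | ⟨x, p, q', hv, he⟩
  · rw [alphaE_ctx hcl] at hcond
    split at hcond <;> exact absurd hcond (by simp)
  · rw [alphaE_pat hcl] at hcond
    have ha : a = ⟨(p, w.1.2), pat_edge C σ hsym (he ▸ w.2)⟩ := by
      injection hcond with h1; injection h1 with h2
    subst ha
    apply Subtype.ext
    show (C.holePos ++ p, w.1.2) = w.1
    have : w.1 = (w.1.1, w.1.2) := rfl
    rw [this, ← he]
  · cases q' with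
    | nil => rw [alphaE_vhead hcl] at hcond; exact absurd hcond (by intro h; cases h)
    | cons j q'' => rw [alphaE_prime hcl] at hcond; exact absurd hcond (by intro h; cases h)

noncomputable def matchIsPullback (hl : ρ.lhs.Linear) :
    IsPullback (𝟙 (ruleEnc ρ).L) (mMatch ρ C σ hl) (ruleEnc ρ).tL (aMatch ρ C σ hl) := by
  have hcomm : 𝟙 (ruleEnc ρ).L ≫ (ruleEnc ρ).tL
      = mMatch ρ C σ hl ≫ aMatch ρ C σ hl := by
    rw [Category.id_comp, m_alpha]
  apply IsPullback.of_isLimit (c := Limits.PullbackCone.mk _ _ hcomm)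
  refine Limits.PullbackCone.IsLimit.mk hcomm (fun sc => sc.fst) (fun sc => Category.comp_id _)
    (fun sc => ?_) (fun sc mm h1 _ => by simpa using h1)
  refine GLHom.ext' (funext fun v => ?_) (funext fun e => ?_)
  · exact alpha_pullback_V ρ C σ hl _ _ (congrFun (congrArg GLHom.onV sc.condition) v)
  · exact alpha_pullback_E ρ C σ hl _ _ (congrFun (congrArg GLHom.onE sc.condition) e)

end MatchPB

section GKsec

variable (ρ : TRSRule S ar X) (C : Ctx S ar X) (σ : X → Term S ar X)

open CategoryTheory

/-- Which classified vertices are kept in the pullback graph. -/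
def KeepCl (r' : Term S ar X) {u : Term S ar X} {c q : List ℕ} : PosCls u c q → Prop
  | .ctx _ => True
  | .pat p _ _ => p = []
  | .vsub x _ _ _ _ => x ∈ r'.vars

/-- Which classified edges are kept in the pullback graph. -/
def KeepClE (r' : Term S ar X) {u : Term S ar X} {c q : List ℕ} : PosCls u c q → Prop
  | .ctx _ => True
  | .pat _ _ _ => False
  | .vsub x _ _ _ _ => x ∈ r'.vars

noncomputable def KeepV (v : (TG (C.fill (ρ.lhs.subst σ))).V) : Prop :=
  KeepCl ρ.rhs (classify C σ ρ.lhs v.1 v.2)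

noncomputable def KeepE (e : (TG (C.fill (ρ.lhs.subst σ))).E) : Prop :=
  KeepClE ρ.rhs (classify C σ ρ.lhs e.1.1 (edge_src_isSome e.2))

lemma keep_src {e : (TG (C.fill (ρ.lhs.subst σ))).E} (he : KeepE ρ C σ e) :
    KeepV ρ C σ ((TG (C.fill (ρ.lhs.subst σ))).src e) := by
  have hk : KeepClE ρ.rhs (classify C σ ρ.lhs e.1.1 (edge_src_isSome e.2)) := he
  show KeepCl ρ.rhs (classify C σ ρ.lhs e.1.1 (edge_src_isSome e.2))
  rcases hcl : classify C σ ρ.lhs e.1.1 (edge_src_isSome e.2) with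
    ⟨h⟩ | ⟨p, hsym, hee⟩ | ⟨x, p, q', hv, hee⟩ <;> rw [hcl] at hk
  · trivial
  · exact hk.elim
  · exact hk

lemma keep_tgt {e : (TG (C.fill (ρ.lhs.subst σ))).E} (he : KeepE ρ C σ e) :
    KeepV ρ C σ ((TG (C.fill (ρ.lhs.subst σ))).tgt e) := by
  have hk : KeepClE ρ.rhs (classify C σ ρ.lhs e.1.1 (edge_src_isSome e.2)) := he
  show KeepCl ρ.rhs (classify C σ ρ.lhs (e.1.1 ++ [e.1.2]) e.2)
  rcases hcl : classify C σ ρ.lhs e.1.1 (edge_src_isSome e.2) with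
    ⟨h⟩ | ⟨p, hsym, hee⟩ | ⟨x, p, q', hv, hee⟩ <;> rw [hcl] at hk
  · by_cases hc : e.1.1 ++ [e.1.2] = C.holePos
    · rw [classify_pat _ (lhs_symAt_nil ρ) (by rw [hc, List.append_nil])]
      exact rfl
    · rw [classify_ctx _ (not_prefix_snoc h hc)]
      trivial
  · exact hk.elim
  · rw [classify_vsub _ hv (by rw [hee, List.append_assoc])]
    exact hk

/-- The pullback graph `G_K`. -/
noncomputable def GK : LGraph (FlatL S) where
  V := {v : (TG (C.fill (ρ.lhs.subst σ))).V // KeepV ρ C σ v}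
  E := {e : (TG (C.fill (ρ.lhs.subst σ))).E // KeepE ρ C σ e}
  src e := ⟨(TG (C.fill (ρ.lhs.subst σ))).src e.1, keep_src ρ C σ e.2⟩
  tgt e := ⟨(TG (C.fill (ρ.lhs.subst σ))).tgt e.1, keep_tgt ρ C σ e.2⟩
  lV v := if v.1.1 = C.holePos then Flat.bot else (TG (C.fill (ρ.lhs.subst σ))).lV v.1
  lE e := (TG (C.fill (ρ.lhs.subst σ))).lE e.1

/-- Inclusion of the pullback graph. -/
noncomputable def gexternal : GK ρ C σ ⟶ TG (C.fill (ρ.lhs.subst σ)) where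
  onV v := v.1
  onE e := e.1
  src_comm e := rfl
  tgt_comm e := rfl
  lV_le v := by
    show (if v.1.1 = C.holePos then Flat.bot else _) ≤ _
    split
    · exact Flat.bot_le _
    · exact le_refl _
  lE_le e := le_refl _

/-- An interface variable of the rhs, as an element of `interfaceVars`. -/
def ivd {x : X} (hx : x ∈ ρ.rhs.vars) : ↥(interfaceVars ρ.rhs) :=
  ⟨Sum.inl ⟨x, hx⟩, ⟨⟨x, hx⟩, rfl⟩⟩

noncomputable def u'V : (GK ρ C σ).V →
    (ctxCC (interfaceG ρ.rhs) (Sum.inr ()) (interfaceVars ρ.rhs)).V := fun v =>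
  match classify C σ ρ.lhs v.1.1 v.1.2 with
  | .ctx _ => Sum.inr ()
  | .pat _ _ _ => Sum.inl (Sum.inl (Sum.inr ()))
  | .vsub x _ q' _ _ =>
      if hx : x ∈ ρ.rhs.vars then
        match q' with
        | [] => Sum.inl (Sum.inl (Sum.inl ⟨x, hx⟩))
        | _ :: _ => Sum.inl (Sum.inr (ivd ρ hx))
      else Sum.inr ()

noncomputable def u'E : (GK ρ C σ).E →
    (ctxCC (interfaceG ρ.rhs) (Sum.inr ()) (interfaceVars ρ.rhs)).E := fun e =>
  match classify C σ ρ.lhs e.1.1.1 (edge_src_isSome e.1.2) with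
  | .ctx _ => if e.1.1.1 ++ [e.1.1.2] = C.holePos then Sum.inr true else Sum.inr false
  | .pat _ _ _ => Sum.inr false
  | .vsub x _ q' _ _ =>
      if hx : x ∈ ρ.rhs.vars then
        match q' with
        | [] => Sum.inl (Sum.inr (Sum.inl (ivd ρ hx)))
        | _ :: _ => Sum.inl (Sum.inr (Sum.inr (ivd ρ hx)))
      else Sum.inr false

variable {ρ C σ}

lemma u'V_ctx {v : (GK ρ C σ).V} {h} (hcl : classify C σ ρ.lhs v.1.1 v.1.2 = .ctx h) :
    u'V ρ C σ v = Sum.inr () := by unfold u'V; rw [hcl]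

lemma u'V_pat {v : (GK ρ C σ).V} {p hsym he}
    (hcl : classify C σ ρ.lhs v.1.1 v.1.2 = .pat p hsym he) :
    u'V ρ C σ v = Sum.inl (Sum.inl (Sum.inr ())) := by unfold u'V; rw [hcl]; rfl

lemma u'V_vhead {v : (GK ρ C σ).V} {x p hv he} (hx : x ∈ ρ.rhs.vars)
    (hcl : classify C σ ρ.lhs v.1.1 v.1.2 = .vsub x p [] hv he) :
    u'V ρ C σ v = Sum.inl (Sum.inl (Sum.inl ⟨x, hx⟩)) := by
  unfold u'V; rw [hcl]
  show (if hx' : x ∈ ρ.rhs.vars then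
      Sum.inl (Sum.inl (Sum.inl (⟨x, hx'⟩ : {y // y ∈ ρ.rhs.vars}))) else Sum.inr ()) = _
  rw [dif_pos hx]

lemma u'V_prime {v : (GK ρ C σ).V} {x p j q' hv he} (hx : x ∈ ρ.rhs.vars)
    (hcl : classify C σ ρ.lhs v.1.1 v.1.2 = .vsub x p (j :: q') hv he) :
    u'V ρ C σ v = Sum.inl (Sum.inr (ivd ρ hx)) := by
  unfold u'V; rw [hcl]
  show (if hx' : x ∈ ρ.rhs.vars then Sum.inl (Sum.inr (ivd ρ hx')) else Sum.inr ()) = _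
  rw [dif_pos hx]

lemma u'E_ctx {e : (GK ρ C σ).E} {h}
    (hcl : classify C σ ρ.lhs e.1.1.1 (edge_src_isSome e.1.2) = .ctx h) :
    u'E ρ C σ e = if e.1.1.1 ++ [e.1.1.2] = C.holePos then Sum.inr true else Sum.inr false := by
  unfold u'E; rw [hcl]; rfl

lemma u'E_vhead {e : (GK ρ C σ).E} {x p hv he} (hx : x ∈ ρ.rhs.vars)
    (hcl : classify C σ ρ.lhs e.1.1.1 (edge_src_isSome e.1.2) = .vsub x p [] hv he) :
    u'E ρ C σ e = Sum.inl (Sum.inr (Sum.inl (ivd ρ hx))) := by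
  unfold u'E; rw [hcl]
  show (if hx' : x ∈ ρ.rhs.vars then
      Sum.inl (Sum.inr (Sum.inl (ivd ρ hx'))) else Sum.inr false) = _
  rw [dif_pos hx]

lemma u'E_prime {e : (GK ρ C σ).E} {x p j q' hv he} (hx : x ∈ ρ.rhs.vars)
    (hcl : classify C σ ρ.lhs e.1.1.1 (edge_src_isSome e.1.2) = .vsub x p (j :: q') hv he) :
    u'E ρ C σ e = Sum.inl (Sum.inr (Sum.inr (ivd ρ hx))) := by
  unfold u'E; rw [hcl]
  show (if hx' : x ∈ ρ.rhs.vars then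
      Sum.inl (Sum.inr (Sum.inr (ivd ρ hx'))) else Sum.inr false) = _
  rw [dif_pos hx]

variable (ρ C σ)

noncomputable def uPrime : GK ρ C σ ⟶ (ruleEnc ρ).K' where
  onV := u'V ρ C σ
  onE := u'E ρ C σ
  src_comm := fun e => by
    have hsrc : (GK ρ C σ).src e
        = ⟨⟨e.1.1.1, edge_src_isSome e.1.2⟩, keep_src ρ C σ e.2⟩ := rfl
    rw [hsrc]
    have hk : KeepClE ρ.rhs (classify C σ ρ.lhs e.1.1.1 (edge_src_isSome e.1.2)) := e.2
    rcases hcl : classify C σ ρ.lhs e.1.1.1 (edge_src_isSome e.1.2) with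
      ⟨h⟩ | ⟨p, hsym, he⟩ | ⟨x, p, q', hv, he⟩ <;> rw [hcl] at hk
    · erw [u'E_ctx hcl, u'V_ctx hcl]
      split <;> rfl
    · exact hk.elim
    · cases q' with
      | nil => erw [u'E_vhead hk hcl, u'V_vhead hk hcl]; rfl
      | cons j q'' => erw [u'E_prime hk hcl, u'V_prime hk hcl]; rfl
  tgt_comm := fun e => by
    have htgt : (GK ρ C σ).tgt e
        = ⟨⟨e.1.1.1 ++ [e.1.1.2], e.1.2⟩, keep_tgt ρ C σ e.2⟩ := rfl
    rw [htgt]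
    have hk : KeepClE ρ.rhs (classify C σ ρ.lhs e.1.1.1 (edge_src_isSome e.1.2)) := e.2
    rcases hcl : classify C σ ρ.lhs e.1.1.1 (edge_src_isSome e.1.2) with
      ⟨h⟩ | ⟨p, hsym, he⟩ | ⟨x, p, q', hv, he⟩ <;> rw [hcl] at hk
    · rw [u'E_ctx hcl]
      by_cases hc : e.1.1.1 ++ [e.1.1.2] = C.holePos
      · rw [if_pos hc]
        rw [u'V_pat (v := ⟨⟨e.1.1.1 ++ [e.1.1.2], e.1.2⟩, keep_tgt ρ C σ e.2⟩)
          (classify_pat _ (lhs_symAt_nil ρ)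
            (by show e.1.1.1 ++ [e.1.1.2] = C.holePos ++ []; rw [hc, List.append_nil]))]
        rfl
      · rw [if_neg hc]
        rw [u'V_ctx (v := ⟨⟨e.1.1.1 ++ [e.1.1.2], e.1.2⟩, keep_tgt ρ C σ e.2⟩)
          (classify_ctx _ (not_prefix_snoc h hc))]
        rfl
    · exact hk.elim
    · cases q' with
      | nil =>
        rw [u'E_vhead hk hcl]
        rw [u'V_prime (v := ⟨⟨e.1.1.1 ++ [e.1.1.2], e.1.2⟩, keep_tgt ρ C σ e.2⟩) hk
          (classify_vsub (q' := [e.1.1.2]) _ hv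
            (by show e.1.1.1 ++ [e.1.1.2] = C.holePos ++ p ++ [e.1.1.2]
                rw [he, List.append_nil]))]
        rfl
      | cons j q'' =>
        rw [u'E_prime hk hcl]
        rw [u'V_prime (v := ⟨⟨e.1.1.1 ++ [e.1.1.2], e.1.2⟩, keep_tgt ρ C σ e.2⟩) hk
          (classify_vsub (q' := (j :: q'') ++ [e.1.1.2]) _ hv
            (by show e.1.1.1 ++ [e.1.1.2] = C.holePos ++ p ++ ((j :: q'') ++ [e.1.1.2])
                simp [he, List.append_assoc]))]
        rfl
  lV_le := fun v => by
    have hk : KeepCl ρ.rhs (classify C σ ρ.lhs v.1.1 v.1.2) := v.2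
    rcases hcl : classify C σ ρ.lhs v.1.1 v.1.2 with
      ⟨h⟩ | ⟨p, hsym, he⟩ | ⟨x, p, q', hv, he⟩ <;> rw [hcl] at hk
    · rw [u'V_ctx hcl]; exact Flat.le_top _
    · rw [u'V_pat hcl]
      have hp : p = [] := hk
      subst hp
      show _ ≤ (if (Sum.inr () : (interfaceG ρ.rhs).V) ∈ interfaceVars ρ.rhs
        then Flat.top else (interfaceG ρ.rhs).lV (Sum.inr ()))
      rw [if_neg (show ¬ _ by rintro ⟨y, hy⟩; cases hy)]
      show (if v.1.1 = C.holePos then Flat.bot else _) ≤ Flat.bot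
      rw [if_pos (show v.1.1 = C.holePos by rw [he, List.append_nil])]
    · cases q' with
      | nil =>
        rw [u'V_vhead hk hcl]
        show _ ≤ (if (Sum.inl (⟨x, hk⟩ : {x // x ∈ ρ.rhs.vars})
          : (interfaceG ρ.rhs).V) ∈ interfaceVars ρ.rhs then Flat.top else Flat.bot)
        rw [if_pos ⟨⟨x, hk⟩, rfl⟩]
        exact Flat.le_top _
      | cons j q'' => rw [u'V_prime hk hcl]; exact Flat.le_top _
  lE_le := fun e => by
    have hk : KeepClE ρ.rhs (classify C σ ρ.lhs e.1.1.1 (edge_src_isSome e.1.2)) := e.2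
    rcases hcl : classify C σ ρ.lhs e.1.1.1 (edge_src_isSome e.1.2) with
      ⟨h⟩ | ⟨p, hsym, he⟩ | ⟨x, p, q', hv, he⟩ <;> rw [hcl] at hk
    · rw [u'E_ctx hcl]; split <;> exact Flat.le_top _
    · exact hk.elim
    · cases q' with
      | nil => rw [u'E_vhead hk hcl]; exact Flat.le_top _
      | cons j q'' => rw [u'E_prime hk hcl]; exact Flat.le_top _

end GKsec


section GKPB

variable (ρ : TRSRule S ar X) (C : Ctx S ar X) (σ : X → Term S ar X)

open CategoryTheory

lemma gk_comm (hl : ρ.lhs.Linear) :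
    gexternal ρ C σ ≫ aMatch ρ C σ hl = uPrime ρ C σ ≫ (ruleEnc ρ).l' := by
  refine GLHom.ext' (funext fun v => ?_) (funext fun e => ?_)
  · show alphaV ρ C σ v.1 = ((ruleEnc ρ).l').onV (u'V ρ C σ v)
    have hk : KeepCl ρ.rhs (classify C σ ρ.lhs v.1.1 v.1.2) := v.2
    rcases hcl : classify C σ ρ.lhs v.1.1 v.1.2 with
      ⟨h⟩ | ⟨p, hsym, he⟩ | ⟨x, p, q', hv, he⟩ <;> rw [hcl] at hk
    · have hL : alphaV ρ C σ v.1 = Sum.inr () := alphaV_ctx hcl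
      rw [hL, u'V_ctx hcl]
      rfl
    · have hp : p = [] := hk
      subst hp
      have hL : alphaV ρ C σ v.1 = Sum.inl (Sum.inl (Sum.inl ⟨[], hsym⟩)) := alphaV_pat hcl
      rw [hL, u'V_pat hcl]
      show _ = Sum.inl (Sum.inl ρ.lhs.encRoot)
      rw [encRoot_lhs]; rfl
    · cases q' with
      | nil =>
        have hL : alphaV ρ C σ v.1 = Sum.inl (Sum.inl (Sum.inr ⟨x, ⟨p, hv⟩⟩)) :=
          alphaV_vhead hcl
        rw [hL, u'V_vhead hk hcl]
        rfl
      | cons j q'' =>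
        have hL : alphaV ρ C σ v.1 = Sum.inl (Sum.inr (vhd ρ hv)) := alphaV_prime hcl
        rw [hL, u'V_prime hk hcl]
        rfl
  · show alphaE ρ C σ e.1 = ((ruleEnc ρ).l').onE (u'E ρ C σ e)
    have hk : KeepClE ρ.rhs (classify C σ ρ.lhs e.1.1.1 (edge_src_isSome e.1.2)) := e.2
    rcases hcl : classify C σ ρ.lhs e.1.1.1 (edge_src_isSome e.1.2) with
      ⟨h⟩ | ⟨p, hsym, he⟩ | ⟨x, p, q', hv, he⟩ <;> rw [hcl] at hk
    · have hL : alphaE ρ C σ e.1 = _ := alphaE_ctx hcl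
      rw [hL, u'E_ctx hcl]
      by_cases hc : e.1.1.1 ++ [e.1.1.2] = C.holePos
      · rw [if_pos hc, if_pos hc]; rfl
      · rw [if_neg hc, if_neg hc]; rfl
    · exact hk.elim
    · cases q' with
      | nil =>
        have hL : alphaE ρ C σ e.1 = Sum.inl (Sum.inr (Sum.inl (vhd ρ hv))) :=
          alphaE_vhead hcl
        rw [hL, u'E_vhead hk hcl]
        rfl
      | cons j q'' =>
        have hL : alphaE ρ C σ e.1 = Sum.inl (Sum.inr (Sum.inr (vhd ρ hv))) :=
          alphaE_prime hcl
        rw [hL, u'E_prime hk hcl]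
        rfl

lemma cond_V {w : (TG (C.fill (ρ.lhs.subst σ))).V} {k' : (ruleEnc ρ).K'.V}
    (hcond : alphaV ρ C σ w = ((ruleEnc ρ).l').onV k') :
    ∃ hk : KeepV ρ C σ w, u'V ρ C σ ⟨w, hk⟩ = k' := by
  obtain ⟨q, hq⟩ := w
  rcases hcl : classify C σ ρ.lhs q hq with ⟨h⟩ | ⟨p, hsym, he⟩ | ⟨x, p, q', hv, he⟩
  · refine ⟨show KeepCl ρ.rhs _ from hcl ▸ trivial, ?_⟩
    erw [u'V_ctx hcl]
    rw [alphaV_ctx hcl] at hcond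
    rcases k' with (((xx | uu) | pk) | uu)
    · injection hcond
    · injection hcond
    · injection hcond
    · rfl
  · rw [alphaV_pat hcl] at hcond
    rcases k' with (((xx | uu) | pk) | uu)
    · injection hcond with h1; injection h1 with h2; injection h2
    · rw [show ((ruleEnc ρ).l'.onV (Sum.inl (Sum.inl (Sum.inr uu))))
          = Sum.inl (Sum.inl ρ.lhs.encRoot) from rfl, encRoot_lhs] at hcond
      injection hcond with h1; injection h1 with h2; injection h2 with h3
      have hp : p = [] := congrArg Subtype.val h3
      refine ⟨show KeepCl ρ.rhs _ from hcl ▸ hp, ?_⟩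
      erw [u'V_pat hcl]; rfl
    · injection hcond with h1; injection h1
    · injection hcond
  · cases q' with
    | nil =>
      rw [alphaV_vhead hcl] at hcond
      rcases k' with (((xx | uu) | pk) | uu)
      · obtain ⟨y, hy⟩ := xx
        injection hcond with h1; injection h1 with h2; injection h2 with h3
        have hxy : x = y := congrArg Subtype.val h3
        subst hxy
        refine ⟨show KeepCl ρ.rhs _ from hcl ▸ hy, ?_⟩
        erw [u'V_vhead hy hcl]; rfl
      · rw [show ((ruleEnc ρ).l'.onV (Sum.inl (Sum.inl (Sum.inr uu))))
            = Sum.inl (Sum.inl ρ.lhs.encRoot) from rfl, encRoot_lhs] at hcond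
        injection hcond with h1; injection h1 with h2; injection h2
      · injection hcond with h1; injection h1
      · injection hcond
    | cons j q'' =>
      rw [alphaV_prime hcl] at hcond
      rcases k' with (((xx | uu) | pk) | uu)
      · injection hcond with h1; injection h1
      · injection hcond with h1; injection h1
      · obtain ⟨pv, hpv⟩ := pk
        obtain ⟨⟨y, hy⟩, rfl⟩ := hpv
        injection hcond with h1; injection h1 with h2
        have h3 := congrArg Subtype.val h2
        have hxy : x = y := by
          have h4 : (Sum.inr (⟨x, ⟨p, hv⟩⟩ : {x // x ∈ ρ.lhs.vars}) : ρ.lhs.encV)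
              = Sum.inr ⟨y, ρ.var_cond hy⟩ := h3
          injection h4 with h5
          exact congrArg Subtype.val h5
        subst hxy
        refine ⟨show KeepCl ρ.rhs _ from hcl ▸ hy, ?_⟩
        erw [u'V_prime hy hcl]
        rfl
      · injection hcond

lemma cond_E {w : (TG (C.fill (ρ.lhs.subst σ))).E} {k' : (ruleEnc ρ).K'.E}
    (hcond : alphaE ρ C σ w = ((ruleEnc ρ).l').onE k') :
    ∃ hk : KeepE ρ C σ w, u'E ρ C σ ⟨w, hk⟩ = k' := by
  rcases hcl : classify C σ ρ.lhs w.1.1 (edge_src_isSome w.2) with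
    ⟨h⟩ | ⟨p, hsym, he⟩ | ⟨x, p, q', hv, he⟩
  · refine ⟨show KeepClE ρ.rhs _ from hcl ▸ trivial, ?_⟩
    erw [u'E_ctx hcl]
    rw [alphaE_ctx hcl] at hcond
    rcases k' with (((ee | (pk | pk)) | b))
    · exact ee.elim
    · by_cases hc : w.1.1 ++ [w.1.2] = C.holePos
      · rw [if_pos hc] at hcond; injection hcond
      · rw [if_neg hc] at hcond; injection hcond
    · by_cases hc : w.1.1 ++ [w.1.2] = C.holePos
      · rw [if_pos hc] at hcond; injection hcond
      · rw [if_neg hc] at hcond; injection hcond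
    · by_cases hc : w.1.1 ++ [w.1.2] = C.holePos
      · rw [if_pos hc] at hcond
        rw [if_pos hc]
        injection hcond with h1
        rw [← h1]
      · rw [if_neg hc] at hcond
        rw [if_neg hc]
        injection hcond with h1
        rw [← h1]
  · rw [alphaE_pat hcl] at hcond
    rcases k' with (((ee | (pk | pk)) | b))
    · exact ee.elim
    · injection hcond with h1; injection h1
    · injection hcond with h1; injection h1
    · injection hcond
  · cases q' with
    | nil =>
      rw [alphaE_vhead hcl] at hcond
      rcases k' with (((ee | (pk | pk)) | b))
      · exact ee.elim
      · obtain ⟨pv, hpv⟩ := pk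
        obtain ⟨⟨y, hy⟩, rfl⟩ := hpv
        injection hcond with h1; injection h1 with h2; injection h2 with h3
        have h4 := congrArg Subtype.val h3
        have hxy : x = y := by
          have h5 : (Sum.inr (⟨x, ⟨p, hv⟩⟩ : {x // x ∈ ρ.lhs.vars}) : ρ.lhs.encV)
              = Sum.inr ⟨y, ρ.var_cond hy⟩ := h4
          injection h5 with h6
          exact congrArg Subtype.val h6
        subst hxy
        refine ⟨show KeepClE ρ.rhs _ from hcl ▸ hy, ?_⟩
        erw [u'E_vhead hy hcl]
        rfl
      · injection hcond with h1; injection h1 with h2; injection h2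
      · injection hcond
    | cons j q'' =>
      rw [alphaE_prime hcl] at hcond
      rcases k' with (((ee | (pk | pk)) | b))
      · exact ee.elim
      · injection hcond with h1; injection h1 with h2; injection h2
      · obtain ⟨pv, hpv⟩ := pk
        obtain ⟨⟨y, hy⟩, rfl⟩ := hpv
        injection hcond with h1; injection h1 with h2; injection h2 with h3
        have h4 := congrArg Subtype.val h3
        have hxy : x = y := by
          have h5 : (Sum.inr (⟨x, ⟨p, hv⟩⟩ : {x // x ∈ ρ.lhs.vars}) : ρ.lhs.encV)
              = Sum.inr ⟨y, ρ.var_cond hy⟩ := h4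
          injection h5 with h6
          exact congrArg Subtype.val h6
        subst hxy
        refine ⟨show KeepClE ρ.rhs _ from hcl ▸ hy, ?_⟩
        erw [u'E_prime hy hcl]
        rfl
      · injection hcond

noncomputable def liftGK (hl : ρ.lhs.Linear) {P : LGraph (FlatL S)}
    (p1 : P ⟶ TG (C.fill (ρ.lhs.subst σ))) (p2 : P ⟶ (ruleEnc ρ).K')
    (hcomm : p1 ≫ aMatch ρ C σ hl = p2 ≫ (ruleEnc ρ).l') : P ⟶ GK ρ C σ where
  onV v := ⟨p1.onV v, (cond_V ρ C σ (congrFun (congrArg GLHom.onV hcomm) v)).choose⟩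
  onE e := ⟨p1.onE e, (cond_E ρ C σ (congrFun (congrArg GLHom.onE hcomm) e)).choose⟩
  src_comm e := Subtype.ext (p1.src_comm e)
  tgt_comm e := Subtype.ext (p1.tgt_comm e)
  lV_le v := by
    show _ ≤ (if (p1.onV v).1 = C.holePos then Flat.bot else _)
    by_cases hc : (p1.onV v).1 = C.holePos
    · rw [if_pos hc]
      have hcond := congrFun (congrArg GLHom.onV hcomm) v
      have hcl : classify C σ ρ.lhs (p1.onV v).1 (p1.onV v).2
          = .pat [] (lhs_symAt_nil ρ) (by rw [hc, List.append_nil]) := classify_pat _ _ _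
      have hL : alphaV ρ C σ (p1.onV v) = Sum.inl (Sum.inl (Sum.inl ⟨[], lhs_symAt_nil ρ⟩)) :=
        alphaV_pat hcl
      have hcond' : (Sum.inl (Sum.inl (Sum.inl (⟨[], lhs_symAt_nil ρ⟩
          : {p : List ℕ // (ρ.lhs.symAt p).isSome}))) : (ruleEnc ρ).L'.V)
          = ((ruleEnc ρ).l').onV (p2.onV v) := by
        erw [← hL]
        exact hcond
      rcases hk' : p2.onV v with (((xx | uu) | pk) | uu)
      · rw [hk'] at hcond'
        injection hcond' with h1; injection h1 with h2; injection h2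
      · have := p2.lV_le v
        rw [hk'] at this
        have hlab : (ruleEnc ρ).K'.lV (Sum.inl (Sum.inl (Sum.inr uu))) = Flat.bot := by
          show (if (Sum.inr () : (interfaceG ρ.rhs).V) ∈ interfaceVars ρ.rhs
            then Flat.top else (interfaceG ρ.rhs).lV (Sum.inr ())) = Flat.bot
          rw [if_neg (show ¬ _ by rintro ⟨y, hy⟩; cases hy)]
          rfl
        rw [hlab] at this
        exact this
      · rw [hk'] at hcond'
        injection hcond' with h1; injection h1
      · rw [hk'] at hcond'
        injection hcond'
    · rw [if_neg hc]
      exact p1.lV_le v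
  lE_le e := p1.lE_le e

noncomputable def gkIsPullback (hl : ρ.lhs.Linear) :
    IsPullback (gexternal ρ C σ) (uPrime ρ C σ) (aMatch ρ C σ hl) (ruleEnc ρ).l' := by
  apply IsPullback.of_isLimit (c := Limits.PullbackCone.mk _ _ (gk_comm ρ C σ hl))
  refine Limits.PullbackCone.IsLimit.mk (gk_comm ρ C σ hl)
    (fun sc => liftGK ρ C σ hl sc.fst sc.snd sc.condition)
    (fun sc => GLHom.ext' rfl rfl) (fun sc => ?_) (fun sc mm h1 h2 => ?_)
  · refine GLHom.ext' (funext fun v => ?_) (funext fun e => ?_)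
    · exact (cond_V ρ C σ (congrFun (congrArg GLHom.onV sc.condition) v)).choose_spec
    · exact (cond_E ρ C σ (congrFun (congrArg GLHom.onE sc.condition) e)).choose_spec
  · refine GLHom.ext' (funext fun v => ?_) (funext fun e => ?_)
    · exact Subtype.ext (congrFun (congrArg GLHom.onV h1) v)
    · exact Subtype.ext (congrFun (congrArg GLHom.onE h1) e)

end GKPB


section Pushout

variable (ρ : TRSRule S ar X) (C : Ctx S ar X) (σ : X → Term S ar X)

open CategoryTheory

lemma sub?_nil (u : Term S ar X) : u.sub? [] = some u := by cases u <;> rfl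

lemma hole_isSome (u : Term S ar X) : ((C.fill (u.subst σ)).sub? C.holePos).isSome := by
  have h : ((C.fill (u.subst σ)).sub? (C.holePos ++ [])).isSome :=
    fill_pat_isSome C σ (by rw [sub?_nil]; rfl)
  rwa [List.append_nil] at h

lemma var_pos_ne_nil {x : X} {p : List ℕ} (hv : ρ.lhs.sub? p = some (.var x)) : p ≠ [] := by
  intro h
  subst h
  rw [sub?_nil] at hv
  exact ρ.lhs_not_var x (Option.some.inj hv)

lemma vsub_pos_ne_hole {x : X} {p q q' : List ℕ} (hv : ρ.lhs.sub? p = some (.var x))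
    (he : q = C.holePos ++ p ++ q') : q ≠ C.holePos := by
  intro h
  rw [h] at he
  have hlen := congrArg List.length he
  simp [List.length_append] at hlen
  exact var_pos_ne_nil ρ hv hlen.1

lemma classify_keep_hole {hq : ((C.fill (ρ.lhs.subst σ)).sub? C.holePos).isSome} :
    KeepV ρ C σ ⟨C.holePos, hq⟩ := by
  show KeepCl ρ.rhs (classify C σ ρ.lhs C.holePos hq)
  rw [classify_pat _ (lhs_symAt_nil ρ) (List.append_nil _).symm]
  exact rfl

lemma varhead_isSome (u : Term S ar X) {x : X} (hm : x ∈ u.vars) :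
    ((C.fill (u.subst σ)).sub? (C.holePos ++ hm.choose)).isSome :=
  fill_pat_isSome C σ (by rw [hm.choose_spec]; rfl)

lemma keepV_varhead {x : X} (hm : x ∈ ρ.lhs.vars) (hx : x ∈ ρ.rhs.vars) :
    KeepV ρ C σ ⟨C.holePos ++ hm.choose, varhead_isSome C σ ρ.lhs hm⟩ := by
  show KeepCl ρ.rhs (classify C σ ρ.lhs (C.holePos ++ hm.choose) _)
  rw [classify_vsub _ hm.choose_spec (List.append_nil _).symm]
  exact hx

/-- The morphism `u : K → G_K`. -/
noncomputable def uK : (ruleEnc ρ).K ⟶ GK ρ C σ where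
  onV v :=
    match v with
    | Sum.inl xx => ⟨⟨C.holePos ++ (ρ.var_cond xx.2).choose,
        varhead_isSome C σ ρ.lhs (ρ.var_cond xx.2)⟩,
        keepV_varhead ρ C σ (ρ.var_cond xx.2) xx.2⟩
    | Sum.inr _ => ⟨⟨C.holePos, hole_isSome C σ ρ.lhs⟩, classify_keep_hole ρ C σ⟩
  onE e := e.elim
  src_comm e := e.elim
  tgt_comm e := e.elim
  lV_le v := Flat.bot_le _
  lE_le e := e.elim

lemma uK_u' : uK ρ C σ ≫ uPrime ρ C σ = (ruleEnc ρ).tK := by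
  refine GLHom.ext' (funext fun v => ?_) (funext fun e => e.elim)
  cases v with
  | inl xx =>
    show u'V ρ C σ _ = Sum.inl (Sum.inl (Sum.inl xx))
    rw [u'V_vhead (x := xx.1) (p := (ρ.var_cond xx.2).choose) xx.2
      (classify_vsub _ (Exists.choose_spec (ρ.var_cond xx.2)) (List.append_nil _).symm)]
  | inr uu =>
    show u'V ρ C σ _ = Sum.inl (Sum.inl (Sum.inr uu))
    rw [u'V_pat (classify_pat _ (lhs_symAt_nil ρ) (List.append_nil _).symm)]

lemma uK_gL (hl : ρ.lhs.Linear) :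
    uK ρ C σ ≫ gexternal ρ C σ = (ruleEnc ρ).l ≫ mMatch ρ C σ hl := by
  refine GLHom.ext' (funext fun v => ?_) (funext fun e => e.elim)
  cases v with
  | inl xx => rfl
  | inr uu =>
    show (⟨C.holePos, hole_isSome C σ ρ.lhs⟩ : (TG (C.fill (ρ.lhs.subst σ))).V)
      = patHomV C σ ρ.lhs ρ.lhs.encRoot
    rw [encRoot_lhs]
    exact Subtype.ext (List.append_nil _).symm

lemma ctx_transfer (a b : Term S ar X) {q : List ℕ} (h : ¬ C.holePos <+: q)
    (hq : ((C.fill a).sub? q).isSome) : ((C.fill b).sub? q).isSome := by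
  rw [← (fill_outside C a b q h).1]
  exact hq

/-- `gR` on vertices, by classification. -/
noncomputable def gRVaux (q : List ℕ) (hq : ((C.fill (ρ.lhs.subst σ)).sub? q).isSome)
    (cl : PosCls ρ.lhs C.holePos q) (hk : KeepCl ρ.rhs cl) :
    (TG (C.fill (ρ.rhs.subst σ))).V :=
  match cl, hk with
  | .ctx h, _ => ⟨q, ctx_transfer C (ρ.lhs.subst σ) (ρ.rhs.subst σ) h hq⟩
  | .pat _ _ _, _ => ⟨C.holePos, hole_isSome C σ ρ.rhs⟩
  | .vsub x p q' hv he, hx =>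
      ⟨C.holePos ++ (hx : x ∈ ρ.rhs.vars).choose ++ q', by
        rw [fill_sub_sub? C σ (Exists.choose_spec (hx : x ∈ ρ.rhs.vars)) q']
        have hs := hq
        rw [he, fill_sub_sub? C σ hv q'] at hs
        exact hs⟩

noncomputable def gRV : (GK ρ C σ).V → (TG (C.fill (ρ.rhs.subst σ))).V := fun v =>
  gRVaux ρ C σ v.1.1 v.1.2 (classify C σ ρ.lhs v.1.1 v.1.2) v.2

/-- `gR` on edges, by classification of the source. -/
noncomputable def gREaux (q : List ℕ) (i : ℕ)
    (hqe : ((C.fill (ρ.lhs.subst σ)).sub? (q ++ [i])).isSome)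
    (cl : PosCls ρ.lhs C.holePos q) (hk : KeepClE ρ.rhs cl) :
    (TG (C.fill (ρ.rhs.subst σ))).E :=
  match cl, hk with
  | .ctx h, _ =>
      ⟨(q, i), by
        by_cases hc : q ++ [i] = C.holePos
        · rw [hc]; exact hole_isSome C σ ρ.rhs
        · exact ctx_transfer C (ρ.lhs.subst σ) (ρ.rhs.subst σ) (not_prefix_snoc h hc) hqe⟩
  | .pat _ _ _, hk => False.elim hk
  | .vsub x p q' hv he, hx =>
      ⟨(C.holePos ++ (hx : x ∈ ρ.rhs.vars).choose ++ q', i), by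
        rw [List.append_assoc (C.holePos ++ (hx : x ∈ ρ.rhs.vars).choose) q' [i],
          fill_sub_sub? C σ (Exists.choose_spec (hx : x ∈ ρ.rhs.vars)) (q' ++ [i])]
        have hs := hqe
        rw [he, List.append_assoc (C.holePos ++ p) q' [i], fill_sub_sub? C σ hv (q' ++ [i])] at hs
        exact hs⟩

noncomputable def gRE : (GK ρ C σ).E → (TG (C.fill (ρ.rhs.subst σ))).E := fun e =>
  gREaux ρ C σ e.1.1.1 e.1.1.2 e.1.2 (classify C σ ρ.lhs e.1.1.1 (edge_src_isSome e.1.2)) e.2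

variable {ρ C σ}

lemma gRV_ctx {q hq} {h} (hcl : classify C σ ρ.lhs q hq = .ctx h)
    (hk : KeepV ρ C σ ⟨q, hq⟩) :
    (gRV ρ C σ ⟨⟨q, hq⟩, hk⟩).1 = q := by
  revert hk
  show ∀ hk : KeepCl ρ.rhs (classify C σ ρ.lhs q hq),
    (gRVaux ρ C σ q hq (classify C σ ρ.lhs q hq) hk).1 = q
  rw [hcl]
  intro hk
  rfl

lemma gRV_pat {q hq} {p hsym he} (hcl : classify C σ ρ.lhs q hq = .pat p hsym he)
    (hk : KeepV ρ C σ ⟨q, hq⟩) :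
    (gRV ρ C σ ⟨⟨q, hq⟩, hk⟩).1 = C.holePos := by
  revert hk
  show ∀ hk : KeepCl ρ.rhs (classify C σ ρ.lhs q hq),
    (gRVaux ρ C σ q hq (classify C σ ρ.lhs q hq) hk).1 = C.holePos
  rw [hcl]
  intro hk
  rfl

lemma gRV_vsub {q hq} {x p q' hv he} (hcl : classify C σ ρ.lhs q hq = .vsub x p q' hv he)
    (hk : KeepV ρ C σ ⟨q, hq⟩) (hx : x ∈ ρ.rhs.vars) :
    (gRV ρ C σ ⟨⟨q, hq⟩, hk⟩).1 = C.holePos ++ hx.choose ++ q' := by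
  revert hk
  show ∀ hk : KeepCl ρ.rhs (classify C σ ρ.lhs q hq),
    (gRVaux ρ C σ q hq (classify C σ ρ.lhs q hq) hk).1 = C.holePos ++ hx.choose ++ q'
  rw [hcl]
  intro hk
  rfl

lemma gRE_ctx {q i hqe} (hk : KeepE ρ C σ ⟨(q, i), hqe⟩) {h}
    (hcl : classify C σ ρ.lhs q (edge_src_isSome hqe) = .ctx h) :
    (gRE ρ C σ ⟨⟨(q, i), hqe⟩, hk⟩).1 = (q, i) := by
  revert hk
  show ∀ hk : KeepClE ρ.rhs (classify C σ ρ.lhs q (edge_src_isSome hqe)),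
    (gREaux ρ C σ q i hqe (classify C σ ρ.lhs q (edge_src_isSome hqe)) hk).1 = (q, i)
  rw [hcl]
  intro hk
  rfl

lemma gRE_vsub {q i hqe} (hk : KeepE ρ C σ ⟨(q, i), hqe⟩) {x p q' hv he}
    (hcl : classify C σ ρ.lhs q (edge_src_isSome hqe) = .vsub x p q' hv he)
    (hx : x ∈ ρ.rhs.vars) :
    (gRE ρ C σ ⟨⟨(q, i), hqe⟩, hk⟩).1 = (C.holePos ++ hx.choose ++ q', i) := by
  revert hk
  show ∀ hk : KeepClE ρ.rhs (classify C σ ρ.lhs q (edge_src_isSome hqe)),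
    (gREaux ρ C σ q i hqe (classify C σ ρ.lhs q (edge_src_isSome hqe)) hk).1
      = (C.holePos ++ hx.choose ++ q', i)
  rw [hcl]
  intro hk
  rfl

variable (ρ C σ)

/-- The morphism `g_R : G_K → G_R`. -/
noncomputable def gR : GK ρ C σ ⟶ TG (C.fill (ρ.rhs.subst σ)) where
  onV := gRV ρ C σ
  onE := gRE ρ C σ
  src_comm e := by
    obtain ⟨⟨⟨q, i⟩, hqe⟩, hk⟩ := e
    apply Subtype.ext
    have hk' : KeepClE ρ.rhs (classify C σ ρ.lhs q (edge_src_isSome hqe)) := hk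
    rcases hcl : classify C σ ρ.lhs q (edge_src_isSome hqe) with
      ⟨h⟩ | ⟨p, hsym, he⟩ | ⟨x, p, q', hv, he⟩ <;> rw [hcl] at hk'
    · show (gRE ρ C σ ⟨⟨(q, i), hqe⟩, hk⟩).1.1
        = (gRV ρ C σ ⟨⟨q, edge_src_isSome hqe⟩, keep_src ρ C σ hk⟩).1
      erw [gRV_ctx hcl, show (gRE ρ C σ ⟨⟨(q, i), hqe⟩, hk⟩).1 = (q, i) from gRE_ctx hk hcl]
    · exact hk'.elim
    · show (gRE ρ C σ ⟨⟨(q, i), hqe⟩, hk⟩).1.1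
        = (gRV ρ C σ ⟨⟨q, edge_src_isSome hqe⟩, keep_src ρ C σ hk⟩).1
      erw [gRV_vsub hcl _ hk', show (gRE ρ C σ ⟨⟨(q, i), hqe⟩, hk⟩).1 = _
        from gRE_vsub hk hcl hk']
  tgt_comm e := by
    obtain ⟨⟨⟨q, i⟩, hqe⟩, hk⟩ := e
    apply Subtype.ext
    have hk' : KeepClE ρ.rhs (classify C σ ρ.lhs q (edge_src_isSome hqe)) := hk
    rcases hcl : classify C σ ρ.lhs q (edge_src_isSome hqe) with
      ⟨h⟩ | ⟨p, hsym, he⟩ | ⟨x, p, q', hv, he⟩ <;> rw [hcl] at hk'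
    · show (gRE ρ C σ ⟨⟨(q, i), hqe⟩, hk⟩).1.1 ++ [(gRE ρ C σ ⟨⟨(q, i), hqe⟩, hk⟩).1.2]
        = (gRV ρ C σ ⟨⟨q ++ [i], hqe⟩, keep_tgt ρ C σ hk⟩).1
      rw [show (gRE ρ C σ ⟨⟨(q, i), hqe⟩, hk⟩).1 = (q, i) from gRE_ctx hk hcl]
      by_cases hc : q ++ [i] = C.holePos
      · erw [gRV_pat (classify_pat _ (lhs_symAt_nil ρ) (by erw [hc, List.append_nil]))]
        exact hc
      · erw [gRV_ctx (classify_ctx _ (not_prefix_snoc h hc))]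
    · exact hk'.elim
    · show (gRE ρ C σ ⟨⟨(q, i), hqe⟩, hk⟩).1.1 ++ [(gRE ρ C σ ⟨⟨(q, i), hqe⟩, hk⟩).1.2]
        = (gRV ρ C σ ⟨⟨q ++ [i], hqe⟩, keep_tgt ρ C σ hk⟩).1
      rw [show (gRE ρ C σ ⟨⟨(q, i), hqe⟩, hk⟩).1 = _ from gRE_vsub hk hcl hk']
      erw [gRV_vsub (classify_vsub (q' := q' ++ [i]) _ hv
        (by erw [he, List.append_assoc (C.holePos ++ p) q' [i]])) _ hk']
      rw [List.append_assoc (C.holePos ++ Exists.choose hk') q' [i]]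
  lV_le v := by
    obtain ⟨⟨q, hq⟩, hk⟩ := v
    have hk' : KeepCl ρ.rhs (classify C σ ρ.lhs q hq) := hk
    rcases hcl : classify C σ ρ.lhs q hq with
      ⟨h⟩ | ⟨p, hsym, he⟩ | ⟨x, p, q', hv, he⟩ <;> rw [hcl] at hk'
    · show (if q = C.holePos then Flat.bot else _) ≤
        ((C.fill (ρ.rhs.subst σ)).symAt (gRV ρ C σ ⟨⟨q, hq⟩, hk⟩).1).elim Flat.bot
          (fun f => Flat.el (Sum.inl f))
      rw [if_neg (fun hq' => h (by rw [hq']))]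
      rw [gRV_ctx hcl, ← (fill_outside C (ρ.lhs.subst σ) (ρ.rhs.subst σ) q h).2]
      exact le_refl _
    · have hp : p = [] := hk'
      subst hp
      show (if q = C.holePos then Flat.bot else _) ≤ _
      rw [if_pos (by rw [he, List.append_nil])]
      exact Flat.bot_le _
    · show (if q = C.holePos then Flat.bot else
          ((C.fill (ρ.lhs.subst σ)).symAt q).elim Flat.bot (fun f => Flat.el (Sum.inl f))) ≤
        ((C.fill (ρ.rhs.subst σ)).symAt (gRV ρ C σ ⟨⟨q, hq⟩, hk⟩).1).elim Flat.bot
          (fun f => Flat.el (Sum.inl f))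
      rw [if_neg (vsub_pos_ne_hole ρ C hv he)]
      rw [gRV_vsub hcl _ hk', symAt_fill_sub C σ (Exists.choose_spec
        (hk' : x ∈ ρ.rhs.vars)) q', he, symAt_fill_sub C σ hv q']
  lE_le e := by
    obtain ⟨⟨⟨q, i⟩, hqe⟩, hk⟩ := e
    have hk' : KeepClE ρ.rhs (classify C σ ρ.lhs q (edge_src_isSome hqe)) := hk
    have hval : (gRE ρ C σ ⟨⟨(q, i), hqe⟩, hk⟩).1.2 = i := by
      rcases hcl : classify C σ ρ.lhs q (edge_src_isSome hqe) with
        ⟨h⟩ | ⟨p, hsym, he⟩ | ⟨x, p, q', hv, he⟩ <;> rw [hcl] at hk'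
      · rw [show (gRE ρ C σ ⟨⟨(q, i), hqe⟩, hk⟩).1 = (q, i) from gRE_ctx hk hcl]
      · exact hk'.elim
      · rw [show (gRE ρ C σ ⟨⟨(q, i), hqe⟩, hk⟩).1 = _ from gRE_vsub hk hcl hk']
    show (Flat.el (Sum.inr (⟨i + 1, Nat.succ_pos i⟩ : ℕ+)) : FlatL S)
      ≤ Flat.el (Sum.inr (⟨(gRE ρ C σ ⟨⟨(q, i), hqe⟩, hk⟩).1.2 + 1, Nat.succ_pos _⟩ : ℕ+))
    simp only [hval]
    exact le_refl _

end Pushout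



section Descent

variable (ρ : TRSRule S ar X) (C : Ctx S ar X) (σ : X → Term S ar X)

open CategoryTheory

noncomputable def wMatch (hl2 : ρ.rhs.Linear) :
    (ruleEnc ρ).R ⟶ TG (C.fill (ρ.rhs.subst σ)) :=
  (patHom C σ ρ.rhs hl2 : GLHom ρ.rhs.enc _)

lemma root_patHomV (u : Term S ar X) (hu : u.Linear) :
    (patHomV C σ u u.encRoot).1 = C.holePos := by
  unfold Term.encRoot
  by_cases h : (u.symAt []).isSome
  · erw [dif_pos h]
    exact List.append_nil _
  · erw [dif_neg h]
    have hmem : Classical.choose (u.root_var h) ∈ u.vars :=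
      ⟨[], Classical.choose_spec (u.root_var h)⟩
    show C.holePos ++ hmem.choose = C.holePos
    rw [hu _ _ [] hmem.choose_spec (Classical.choose_spec (u.root_var h))]
    exact List.append_nil _

lemma push_comm (hl2 : ρ.rhs.Linear) :
    (ruleEnc ρ).r ≫ wMatch ρ C σ hl2 = uK ρ C σ ≫ gR ρ C σ := by
  refine GLHom.ext' (funext fun v => ?_) (funext fun e => e.elim)
  cases v with
  | inl xx =>
    apply Subtype.ext
    show (patHomV C σ ρ.rhs (Sum.inr xx)).1
      = (gRV ρ C σ ⟨⟨C.holePos ++ (ρ.var_cond xx.2).choose,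
          varhead_isSome C σ ρ.lhs (ρ.var_cond xx.2)⟩,
          keepV_varhead ρ C σ (ρ.var_cond xx.2) xx.2⟩).1
    rw [gRV_vsub (classify_vsub _ (Exists.choose_spec (ρ.var_cond xx.2))
      (List.append_nil _).symm) _ xx.2]
    exact (List.append_nil _).symm
  | inr uu =>
    apply Subtype.ext
    show (patHomV C σ ρ.rhs ρ.rhs.encRoot).1
      = (gRV ρ C σ ⟨⟨C.holePos, hole_isSome C σ ρ.lhs⟩, classify_keep_hole ρ C σ⟩).1
    rw [root_patHomV C σ ρ.rhs hl2,
      gRV_pat (classify_pat _ (lhs_symAt_nil ρ) (List.append_nil _).symm)]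

/-- Canonical `G_K` elements used by the pushout descent. -/
noncomputable def ctxVertS (q : List ℕ) (hq : ((C.fill (ρ.rhs.subst σ)).sub? q).isSome)
    (h : ¬ C.holePos <+: q) : (GK ρ C σ).V :=
  ⟨⟨q, ctx_transfer C (ρ.rhs.subst σ) (ρ.lhs.subst σ) h hq⟩, by
    show KeepCl ρ.rhs (classify C σ ρ.lhs q _)
    rw [classify_ctx _ h]
    trivial⟩

noncomputable def vsubVertS (x : X) (p q' : List ℕ) (hv : ρ.rhs.sub? p = some (.var x))
    (hs : ((σ x).sub? q').isSome) : (GK ρ C σ).V :=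
  ⟨⟨C.holePos ++ (ρ.var_cond ⟨p, hv⟩).choose ++ q', by
      rw [fill_sub_sub? C σ (Exists.choose_spec (ρ.var_cond ⟨p, hv⟩)) q']
      exact hs⟩, by
    show KeepCl ρ.rhs (classify C σ ρ.lhs (C.holePos ++ (ρ.var_cond ⟨p, hv⟩).choose ++ q') _)
    rw [classify_vsub _ (Exists.choose_spec (ρ.var_cond ⟨p, hv⟩)) rfl]
    exact ⟨p, hv⟩⟩

noncomputable def holeVertS : (GK ρ C σ).V :=
  ⟨⟨C.holePos, hole_isSome C σ ρ.lhs⟩, classify_keep_hole ρ C σ⟩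

noncomputable def ctxEdgeS (q : List ℕ) (i : ℕ)
    (hq : ((C.fill (ρ.rhs.subst σ)).sub? (q ++ [i])).isSome)
    (h : ¬ C.holePos <+: q) : (GK ρ C σ).E :=
  ⟨⟨(q, i), by
      by_cases hc : q ++ [i] = C.holePos
      · rw [hc]; exact hole_isSome C σ ρ.lhs
      · exact ctx_transfer C (ρ.rhs.subst σ) (ρ.lhs.subst σ) (not_prefix_snoc h hc) hq⟩, by
    show KeepClE ρ.rhs (classify C σ ρ.lhs q _)
    rw [classify_ctx _ h]
    trivial⟩

noncomputable def vsubEdgeS (x : X) (p q' : List ℕ) (i : ℕ)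
    (hv : ρ.rhs.sub? p = some (.var x)) (hs : ((σ x).sub? (q' ++ [i])).isSome) :
    (GK ρ C σ).E :=
  ⟨⟨(C.holePos ++ (ρ.var_cond ⟨p, hv⟩).choose ++ q', i), by
      rw [List.append_assoc (C.holePos ++ (ρ.var_cond ⟨p, hv⟩).choose) q' [i],
        fill_sub_sub? C σ (Exists.choose_spec (ρ.var_cond ⟨p, hv⟩)) (q' ++ [i])]
      exact hs⟩, by
    show KeepClE ρ.rhs
      (classify C σ ρ.lhs (C.holePos ++ (ρ.var_cond ⟨p, hv⟩).choose ++ q') _)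
    rw [classify_vsub _ (Exists.choose_spec (ρ.var_cond ⟨p, hv⟩)) rfl]
    exact ⟨p, hv⟩⟩

lemma t_vsub_isSome {x : X} {p q q' : List ℕ} (hv : ρ.rhs.sub? p = some (.var x))
    (he : q = C.holePos ++ p ++ q') (hq : ((C.fill (ρ.rhs.subst σ)).sub? q).isSome) :
    ((σ x).sub? q').isSome := by
  rw [he, fill_sub_sub? C σ hv q'] at hq
  exact hq

lemma t_vsub_edge_isSome {x : X} {p q q' : List ℕ} {i : ℕ}
    (hv : ρ.rhs.sub? p = some (.var x)) (he : q = C.holePos ++ p ++ q')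
    (hq : ((C.fill (ρ.rhs.subst σ)).sub? (q ++ [i])).isSome) :
    ((σ x).sub? (q' ++ [i])).isSome := by
  rw [he, List.append_assoc (C.holePos ++ p) q' [i], fill_sub_sub? C σ hv (q' ++ [i])] at hq
  exact hq

variable {Z : LGraph (FlatL S)}

noncomputable def descV (c1 : GLHom ρ.rhs.enc Z) (c2 : GLHom (GK ρ C σ) Z) :
    (TG (C.fill (ρ.rhs.subst σ))).V → Z.V := fun v =>
  match classify C σ ρ.rhs v.1 v.2 with
  | .ctx h => c2.onV (ctxVertS ρ C σ v.1 v.2 h)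
  | .pat p hsym _ => c1.onV (Sum.inl ⟨p, hsym⟩)
  | .vsub x p q' hv he => c2.onV (vsubVertS ρ C σ x p q' hv (t_vsub_isSome ρ C σ hv he v.2))

noncomputable def descE (c1 : GLHom ρ.rhs.enc Z) (c2 : GLHom (GK ρ C σ) Z) :
    (TG (C.fill (ρ.rhs.subst σ))).E → Z.E := fun e =>
  match classify C σ ρ.rhs e.1.1 (edge_src_isSome e.2) with
  | .ctx h => c2.onE (ctxEdgeS ρ C σ e.1.1 e.1.2 e.2 h)
  | .pat p hsym he => c1.onE ⟨(p, e.1.2), pat_edge C σ hsym (he ▸ e.2)⟩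
  | .vsub x p q' hv he =>
      c2.onE (vsubEdgeS ρ C σ x p q' e.1.2 hv (t_vsub_edge_isSome ρ C σ hv he e.2))

variable {ρ C σ}

lemma descV_ctx {c1 : GLHom ρ.rhs.enc Z} {c2 : GLHom (GK ρ C σ) Z}
    {q : List ℕ} {hq} {h} (hcl : classify C σ ρ.rhs q hq = .ctx h) :
    descV ρ C σ c1 c2 ⟨q, hq⟩ = c2.onV (ctxVertS ρ C σ q hq h) := by
  unfold descV; rw [hcl]

lemma descV_pat {c1 : GLHom ρ.rhs.enc Z} {c2 : GLHom (GK ρ C σ) Z}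
    {q : List ℕ} {hq} {p hsym he} (hcl : classify C σ ρ.rhs q hq = .pat p hsym he) :
    descV ρ C σ c1 c2 ⟨q, hq⟩ = c1.onV (Sum.inl ⟨p, hsym⟩) := by
  unfold descV; rw [hcl]

lemma descV_vsub {c1 : GLHom ρ.rhs.enc Z} {c2 : GLHom (GK ρ C σ) Z}
    {q : List ℕ} {hq} {x p q' hv he} (hcl : classify C σ ρ.rhs q hq = .vsub x p q' hv he) :
    descV ρ C σ c1 c2 ⟨q, hq⟩
      = c2.onV (vsubVertS ρ C σ x p q' hv (t_vsub_isSome ρ C σ hv he hq)) := by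
  unfold descV; rw [hcl]

lemma descE_ctx {c1 : GLHom ρ.rhs.enc Z} {c2 : GLHom (GK ρ C σ) Z}
    {e : (TG (C.fill (ρ.rhs.subst σ))).E} {h}
    (hcl : classify C σ ρ.rhs e.1.1 (edge_src_isSome e.2) = .ctx h) :
    descE ρ C σ c1 c2 e = c2.onE (ctxEdgeS ρ C σ e.1.1 e.1.2 e.2 h) := by
  unfold descE; rw [hcl]

lemma descE_pat {c1 : GLHom ρ.rhs.enc Z} {c2 : GLHom (GK ρ C σ) Z}
    {e : (TG (C.fill (ρ.rhs.subst σ))).E} {p hsym he}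
    (hcl : classify C σ ρ.rhs e.1.1 (edge_src_isSome e.2) = .pat p hsym he) :
    descE ρ C σ c1 c2 e = c1.onE ⟨(p, e.1.2), pat_edge C σ hsym (he ▸ e.2)⟩ := by
  unfold descE; rw [hcl]

lemma descE_vsub {c1 : GLHom ρ.rhs.enc Z} {c2 : GLHom (GK ρ C σ) Z}
    {e : (TG (C.fill (ρ.rhs.subst σ))).E} {x p q' hv he}
    (hcl : classify C σ ρ.rhs e.1.1 (edge_src_isSome e.2) = .vsub x p q' hv he) :
    descE ρ C σ c1 c2 e
      = c2.onE (vsubEdgeS ρ C σ x p q' e.1.2 hv (t_vsub_edge_isSome ρ C σ hv he e.2)) := by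
  unfold descE; rw [hcl]


lemma encRoot_var (u : Term S ar X) {x : X} (hv : u.sub? [] = some (.var x))
    (h : ¬ (u.symAt []).isSome) : u.encRoot = Sum.inr ⟨x, ⟨[], hv⟩⟩ := by
  unfold Term.encRoot
  erw [dif_neg h]
  have hspec := Classical.choose_spec (u.root_var h)
  have hx : Classical.choose (u.root_var h) = x := by
    rw [hspec] at hv
    exact Term.var.inj (Option.some.inj hv)
  exact congrArg Sum.inr (Subtype.ext hx)

lemma hcomm_var {Z : LGraph (FlatL S)} {c1 : (ruleEnc ρ).R ⟶ Z} {c2 : GK ρ C σ ⟶ Z}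
    (hcomm : (ruleEnc ρ).r ≫ c1 = uK ρ C σ ≫ c2) (xx : {x // x ∈ ρ.rhs.vars}) :
    GLHom.onV c1 (Sum.inr xx) = GLHom.onV c2
      ⟨⟨C.holePos ++ (ρ.var_cond xx.2).choose, varhead_isSome C σ ρ.lhs (ρ.var_cond xx.2)⟩,
        keepV_varhead ρ C σ (ρ.var_cond xx.2) xx.2⟩ :=
  congrFun (congrArg GLHom.onV hcomm) (Sum.inl xx)

lemma hcomm_root {Z : LGraph (FlatL S)} {c1 : (ruleEnc ρ).R ⟶ Z} {c2 : GK ρ C σ ⟶ Z}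
    (hcomm : (ruleEnc ρ).r ≫ c1 = uK ρ C σ ≫ c2) :
    GLHom.onV c1 ρ.rhs.encRoot = GLHom.onV c2
      ⟨⟨C.holePos, hole_isSome C σ ρ.lhs⟩, classify_keep_hole ρ C σ⟩ :=
  congrFun (congrArg GLHom.onV hcomm) (Sum.inr ())

/-- The descent morphism for the pushout. -/
noncomputable def descHom {Z : LGraph (FlatL S)} (c1 : (ruleEnc ρ).R ⟶ Z)
    (c2 : GK ρ C σ ⟶ Z) (hcomm : (ruleEnc ρ).r ≫ c1 = uK ρ C σ ≫ c2)
    (hl2 : ρ.rhs.Linear) : TG (C.fill (ρ.rhs.subst σ)) ⟶ Z where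
  onV := descV ρ C σ c1 c2
  onE := descE ρ C σ c1 c2
  src_comm e := by
    obtain ⟨⟨q, i⟩, hqe⟩ := e
    rw [show (TG (C.fill (ρ.rhs.subst σ))).src ⟨(q, i), hqe⟩
      = ⟨q, edge_src_isSome hqe⟩ from rfl]
    rcases hcl : classify C σ ρ.rhs q (edge_src_isSome hqe) with
      ⟨h⟩ | ⟨p, hsym, he⟩ | ⟨x, p, q', hv, he⟩
    · erw [descE_ctx (e := ⟨(q, i), hqe⟩) hcl, descV_ctx hcl, GLHom.src_comm]
      exact congrArg (GLHom.onV c2) (Subtype.ext (Subtype.ext rfl))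
    · erw [descE_pat (e := ⟨(q, i), hqe⟩) hcl, descV_pat hcl, GLHom.src_comm]
      rfl
    · erw [descE_vsub (e := ⟨(q, i), hqe⟩) hcl, descV_vsub hcl, GLHom.src_comm]
      exact congrArg (GLHom.onV c2) (Subtype.ext (Subtype.ext rfl))
  tgt_comm e := by
    obtain ⟨⟨q, i⟩, hqe⟩ := e
    rw [show (TG (C.fill (ρ.rhs.subst σ))).tgt ⟨(q, i), hqe⟩ = ⟨q ++ [i], hqe⟩ from rfl]
    rcases hcl : classify C σ ρ.rhs q (edge_src_isSome hqe) with
      ⟨h⟩ | ⟨p, hsym, he⟩ | ⟨x, p, q', hv, he⟩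
    · erw [descE_ctx (e := ⟨(q, i), hqe⟩) hcl, GLHom.tgt_comm]
      by_cases hc : q ++ [i] = C.holePos
      · have h1 : (GK ρ C σ).tgt (ctxEdgeS ρ C σ q i hqe h)
            = ⟨⟨C.holePos, hole_isSome C σ ρ.lhs⟩, classify_keep_hole ρ C σ⟩ :=
          Subtype.ext (Subtype.ext hc)
        rw [h1, ← hcomm_root hcomm]
        by_cases hroot : (ρ.rhs.symAt []).isSome
        · erw [descV_pat (classify_pat _ hroot (by erw [hc, List.append_nil]))]
          refine (congrArg (GLHom.onV c1) ?_).symm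
          unfold Term.encRoot
          erw [dif_pos hroot]
        · obtain ⟨x₀, hv₀⟩ := ρ.rhs.root_var hroot
          erw [descV_vsub (classify_vsub (p := []) (q' := []) _ hv₀
            (by erw [hc]; simp)), encRoot_var ρ.rhs hv₀ hroot,
            hcomm_var hcomm ⟨x₀, ⟨[], hv₀⟩⟩]
          exact congrArg (GLHom.onV c2) (Subtype.ext (Subtype.ext (List.append_nil _).symm))
      · erw [descV_ctx (classify_ctx _ (not_prefix_snoc h hc))]
        exact congrArg (GLHom.onV c2) (Subtype.ext (Subtype.ext rfl))
    · erw [descE_pat (e := ⟨(q, i), hqe⟩) hcl, GLHom.tgt_comm]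
      by_cases hs2 : (ρ.rhs.symAt (p ++ [i])).isSome
      · erw [descV_pat (classify_pat _ hs2 (by erw [he, List.append_assoc]))]
        refine congrArg (GLHom.onV c1) ?_
        show ρ.rhs.encTgt ⟨(p, i), pat_edge C σ hsym (he ▸ hqe)⟩ = _
        unfold Term.encTgt
        erw [dif_pos hs2]
      · have hv2 := Classical.choose_spec
          (ρ.rhs.edge_tgt_var (pat_edge C σ hsym (he ▸ hqe)) hs2)
        erw [descV_vsub (classify_vsub (q' := []) _ hv2
          (by erw [he, List.append_assoc, List.append_nil]))]
        refine Eq.trans (congrArg (GLHom.onV c1) ?_)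
          (Eq.trans (hcomm_var hcomm ⟨_, ⟨p ++ [i], hv2⟩⟩) ?_)
        · show ρ.rhs.encTgt ⟨(p, i), pat_edge C σ hsym (he ▸ hqe)⟩ = _
          unfold Term.encTgt
          erw [dif_neg hs2]
        · exact congrArg (GLHom.onV c2)
            (Subtype.ext (Subtype.ext (List.append_nil _).symm))
    · erw [descE_vsub (e := ⟨(q, i), hqe⟩) hcl, GLHom.tgt_comm,
        descV_vsub (classify_vsub (q' := q' ++ [i]) _ hv
          (by rw [he, List.append_assoc (C.holePos ++ p) q' [i]]))]
      exact congrArg (GLHom.onV c2)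
        (Subtype.ext (Subtype.ext (List.append_assoc _ q' [i])))
  lV_le v := by
    obtain ⟨q, hq⟩ := v
    rcases hcl : classify C σ ρ.rhs q hq with
      ⟨h⟩ | ⟨p, hsym, he⟩ | ⟨x, p, q', hv, he⟩
    · erw [descV_ctx hcl]
      refine le_trans ?_ (GLHom.lV_le c2 (ctxVertS ρ C σ q hq h))
      show ((C.fill (ρ.rhs.subst σ)).symAt q).elim Flat.bot (fun f => Flat.el (Sum.inl f))
        ≤ (if q = C.holePos then Flat.bot
            else ((C.fill (ρ.lhs.subst σ)).symAt q).elim Flat.bot (fun f => Flat.el (Sum.inl f)))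
      rw [if_neg (fun hq' => h (by rw [hq'])),
        (fill_outside C (ρ.lhs.subst σ) (ρ.rhs.subst σ) q h).2]
    · erw [descV_pat hcl]
      refine le_trans ?_ (GLHom.lV_le c1 (Sum.inl ⟨p, hsym⟩))
      show ((C.fill (ρ.rhs.subst σ)).symAt q).elim Flat.bot (fun f => Flat.el (Sum.inl f))
        ≤ (ρ.rhs.symAt p).elim Flat.bot (fun f => Flat.el (Sum.inl f))
      obtain ⟨f, hf⟩ := Option.isSome_iff_exists.mp hsym
      rw [he, symAt_fill_pat C σ hf, hf]
    · erw [descV_vsub hcl]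
      refine le_trans ?_ (GLHom.lV_le c2 (vsubVertS ρ C σ x p q' hv
        (t_vsub_isSome ρ C σ hv he hq)))
      show ((C.fill (ρ.rhs.subst σ)).symAt q).elim Flat.bot (fun f => Flat.el (Sum.inl f))
        ≤ (if C.holePos ++ (ρ.var_cond ⟨p, hv⟩).choose ++ q' = C.holePos then Flat.bot
            else ((C.fill (ρ.lhs.subst σ)).symAt
              (C.holePos ++ (ρ.var_cond ⟨p, hv⟩).choose ++ q')).elim Flat.bot
                (fun f => Flat.el (Sum.inl f)))
      rw [if_neg (vsub_pos_ne_hole ρ C (Exists.choose_spec (ρ.var_cond ⟨p, hv⟩)) rfl),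
        symAt_fill_sub C σ (Exists.choose_spec (ρ.var_cond ⟨p, hv⟩)) q',
        he, symAt_fill_sub C σ hv q']
  lE_le e := by
    obtain ⟨⟨q, i⟩, hqe⟩ := e
    rcases hcl : classify C σ ρ.rhs q (edge_src_isSome hqe) with
      ⟨h⟩ | ⟨p, hsym, he⟩ | ⟨x, p, q', hv, he⟩
    · erw [descE_ctx (e := ⟨(q, i), hqe⟩) hcl]
      exact GLHom.lE_le c2 (ctxEdgeS ρ C σ q i hqe h)
    · erw [descE_pat (e := ⟨(q, i), hqe⟩) hcl]
      exact GLHom.lE_le c1 ⟨(p, i), pat_edge C σ hsym (he ▸ hqe)⟩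
    · erw [descE_vsub (e := ⟨(q, i), hqe⟩) hcl]
      exact GLHom.lE_le c2 (vsubEdgeS ρ C σ x p q' i hv (t_vsub_edge_isSome ρ C σ hv he hqe))

lemma s_vsub_isSome {x : X} {p q q' : List ℕ} (hv : ρ.lhs.sub? p = some (.var x))
    (he : q = C.holePos ++ p ++ q') (hq : ((C.fill (ρ.lhs.subst σ)).sub? q).isSome) :
    ((σ x).sub? q').isSome := by
  rw [he, fill_sub_sub? C σ hv q'] at hq
  exact hq

lemma gRV_ctx' {v : (GK ρ C σ).V} {h} (hcl : classify C σ ρ.lhs v.1.1 v.1.2 = .ctx h) :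
    (gRV ρ C σ v).1 = v.1.1 := by
  obtain ⟨⟨q, hq⟩, hk⟩ := v
  exact gRV_ctx hcl hk

lemma gRV_pat' {v : (GK ρ C σ).V} {p hsym he}
    (hcl : classify C σ ρ.lhs v.1.1 v.1.2 = .pat p hsym he) :
    (gRV ρ C σ v).1 = C.holePos := by
  obtain ⟨⟨q, hq⟩, hk⟩ := v
  exact gRV_pat hcl hk

lemma gRV_vsub' {v : (GK ρ C σ).V} {x p q' hv he}
    (hcl : classify C σ ρ.lhs v.1.1 v.1.2 = .vsub x p q' hv he) (hx : x ∈ ρ.rhs.vars) :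
    (gRV ρ C σ v).1 = C.holePos ++ hx.choose ++ q' := by
  obtain ⟨⟨q, hq⟩, hk⟩ := v
  exact gRV_vsub hcl hk hx

lemma gRE_ctx' {e : (GK ρ C σ).E} {h}
    (hcl : classify C σ ρ.lhs e.1.1.1 (edge_src_isSome e.1.2) = .ctx h) :
    (gRE ρ C σ e).1 = (e.1.1.1, e.1.1.2) := by
  obtain ⟨⟨⟨q, i⟩, hqe⟩, hk⟩ := e
  exact gRE_ctx hk hcl

lemma gRE_vsub' {e : (GK ρ C σ).E} {x p q' hv he}
    (hcl : classify C σ ρ.lhs e.1.1.1 (edge_src_isSome e.1.2) = .vsub x p q' hv he)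
    (hx : x ∈ ρ.rhs.vars) :
    (gRE ρ C σ e).1 = (C.holePos ++ hx.choose ++ q', e.1.1.2) := by
  obtain ⟨⟨⟨q, i⟩, hqe⟩, hk⟩ := e
  exact gRE_vsub hk hcl hx

lemma push_fac_left {Z : LGraph (FlatL S)} (c1 : (ruleEnc ρ).R ⟶ Z) (c2 : GK ρ C σ ⟶ Z)
    (hcomm : (ruleEnc ρ).r ≫ c1 = uK ρ C σ ≫ c2) (hl2 : ρ.rhs.Linear) :
    wMatch ρ C σ hl2 ≫ descHom c1 c2 hcomm hl2 = c1 := by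
  refine GLHom.ext' (funext fun v => ?_) (funext fun e => ?_)
  · cases v with
    | inl pp =>
      show descV ρ C σ c1 c2 ⟨C.holePos ++ pp.1,
        (patHomV C σ ρ.rhs (Sum.inl pp)).2⟩ = GLHom.onV c1 (Sum.inl pp)
      erw [descV_pat (classify_pat _ pp.2 rfl)]
    | inr xx =>
      show descV ρ C σ c1 c2 ⟨C.holePos ++ xx.2.choose,
        (patHomV C σ ρ.rhs (Sum.inr xx)).2⟩ = GLHom.onV c1 (Sum.inr xx)
      erw [descV_vsub (classify_vsub _ xx.2.choose_spec (List.append_nil _).symm)]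
      rw [hcomm_var hcomm xx]
      exact congrArg (GLHom.onV c2) (Subtype.ext (Subtype.ext (List.append_nil _)))
  · show descE ρ C σ c1 c2 ⟨(C.holePos ++ e.1.1, e.1.2),
      (patHomE C σ ρ.rhs e).2⟩ = GLHom.onE c1 e
    obtain ⟨f, hf, hi⟩ := e.2
    erw [descE_pat (classify_pat _ (by rw [hf]; rfl) rfl)]
    exact congrArg (GLHom.onE c1) (Subtype.ext rfl)

lemma push_fac_right {Z : LGraph (FlatL S)} (c1 : (ruleEnc ρ).R ⟶ Z) (c2 : GK ρ C σ ⟶ Z)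
    (hcomm : (ruleEnc ρ).r ≫ c1 = uK ρ C σ ≫ c2) (hl1 : ρ.lhs.Linear) (hl2 : ρ.rhs.Linear) :
    gR ρ C σ ≫ descHom c1 c2 hcomm hl2 = c2 := by
  refine GLHom.ext' (funext fun v => ?_) (funext fun e => ?_)
  · obtain ⟨⟨q, hq⟩, hk⟩ := v
    have hk' : KeepCl ρ.rhs (classify C σ ρ.lhs q hq) := hk
    rcases hcl : classify C σ ρ.lhs q hq with
      ⟨h⟩ | ⟨p, hsym, he⟩ | ⟨x, p, q', hv, he⟩ <;> rw [hcl] at hk'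
    · have harg : gRV ρ C σ ⟨⟨q, hq⟩, hk⟩
          = ⟨q, ctx_transfer C (ρ.lhs.subst σ) (ρ.rhs.subst σ) h hq⟩ :=
        Subtype.ext (gRV_ctx hcl hk)
      show descV ρ C σ c1 c2 (gRV ρ C σ ⟨⟨q, hq⟩, hk⟩) = GLHom.onV c2 ⟨⟨q, hq⟩, hk⟩
      erw [harg, descV_ctx (classify_ctx _ h)]
      exact congrArg (GLHom.onV c2) (Subtype.ext (Subtype.ext rfl))
    · have hp : p = [] := hk'
      subst hp
      have hqc : q = C.holePos := by rw [he, List.append_nil]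
      have harg : gRV ρ C σ ⟨⟨q, hq⟩, hk⟩ = ⟨C.holePos, hole_isSome C σ ρ.rhs⟩ :=
        Subtype.ext (gRV_pat hcl hk)
      show descV ρ C σ c1 c2 (gRV ρ C σ ⟨⟨q, hq⟩, hk⟩) = GLHom.onV c2 ⟨⟨q, hq⟩, hk⟩
      have hvv : (⟨⟨q, hq⟩, hk⟩ : (GK ρ C σ).V)
          = ⟨⟨C.holePos, hole_isSome C σ ρ.lhs⟩, classify_keep_hole ρ C σ⟩ :=
        Subtype.ext (Subtype.ext hqc)
      rw [harg, hvv]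
      by_cases hroot : (ρ.rhs.symAt []).isSome
      · erw [descV_pat (classify_pat _ hroot (List.append_nil _).symm), ← hcomm_root hcomm]
        refine congrArg (GLHom.onV c1) ?_
        unfold Term.encRoot
        erw [dif_pos hroot]
      · obtain ⟨x₀, hv₀⟩ := ρ.rhs.root_var hroot
        erw [descV_vsub (classify_vsub (p := []) (q' := []) _ hv₀ (by simp)),
          ← hcomm_root hcomm, encRoot_var ρ.rhs hv₀ hroot, hcomm_var hcomm ⟨x₀, ⟨[], hv₀⟩⟩]
        exact congrArg (GLHom.onV c2) (Subtype.ext (Subtype.ext (List.append_nil _)))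
    · have hx : x ∈ ρ.rhs.vars := hk'
      have harg : gRV ρ C σ ⟨⟨q, hq⟩, hk⟩
          = ⟨C.holePos ++ hx.choose ++ q', by
              rw [fill_sub_sub? C σ hx.choose_spec q']
              exact s_vsub_isSome hv he hq⟩ :=
        Subtype.ext (gRV_vsub hcl hk hx)
      show descV ρ C σ c1 c2 (gRV ρ C σ ⟨⟨q, hq⟩, hk⟩) = GLHom.onV c2 ⟨⟨q, hq⟩, hk⟩
      erw [harg, descV_vsub (classify_vsub _ hx.choose_spec rfl)]
      refine congrArg (GLHom.onV c2) (Subtype.ext (Subtype.ext ?_))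
      show C.holePos ++ (ρ.var_cond ⟨hx.choose, hx.choose_spec⟩).choose ++ q' = q
      rw [hl1 x _ p (Exists.choose_spec (ρ.var_cond ⟨hx.choose, hx.choose_spec⟩)) hv, ← he]
  · obtain ⟨⟨⟨q, i⟩, hqe⟩, hk⟩ := e
    have hk' : KeepClE ρ.rhs (classify C σ ρ.lhs q (edge_src_isSome hqe)) := hk
    rcases hcl : classify C σ ρ.lhs q (edge_src_isSome hqe) with
      ⟨h⟩ | ⟨p, hsym, he⟩ | ⟨x, p, q', hv, he⟩ <;> rw [hcl] at hk'
    · have hpf : ((C.fill (ρ.rhs.subst σ)).sub? (q ++ [i])).isSome := by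
        by_cases hc : q ++ [i] = C.holePos
        · rw [hc]; exact hole_isSome C σ ρ.rhs
        · exact ctx_transfer C (ρ.lhs.subst σ) (ρ.rhs.subst σ) (not_prefix_snoc h hc) hqe
      have harg : gRE ρ C σ ⟨⟨(q, i), hqe⟩, hk⟩ = ⟨(q, i), hpf⟩ :=
        Subtype.ext (gRE_ctx hk hcl)
      show descE ρ C σ c1 c2 (gRE ρ C σ ⟨⟨(q, i), hqe⟩, hk⟩) = GLHom.onE c2 ⟨⟨(q, i), hqe⟩, hk⟩
      erw [harg, descE_ctx (classify_ctx _ h)]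
      exact congrArg (GLHom.onE c2) (Subtype.ext (Subtype.ext rfl))
    · exact hk'.elim
    · have hx : x ∈ ρ.rhs.vars := hk'
      have hs : ((σ x).sub? (q' ++ [i])).isSome := by
        have hqe' := hqe
        rw [he, List.append_assoc (C.holePos ++ p) q' [i],
          fill_sub_sub? C σ hv (q' ++ [i])] at hqe'
        exact hqe'
      have hpf : ((C.fill (ρ.rhs.subst σ)).sub?
          ((C.holePos ++ hx.choose ++ q') ++ [i])).isSome := by
        rw [List.append_assoc (C.holePos ++ hx.choose) q' [i],
          fill_sub_sub? C σ hx.choose_spec (q' ++ [i])]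
        exact hs
      have harg : gRE ρ C σ ⟨⟨(q, i), hqe⟩, hk⟩ = ⟨(C.holePos ++ hx.choose ++ q', i), hpf⟩ :=
        Subtype.ext (gRE_vsub hk hcl hx)
      show descE ρ C σ c1 c2 (gRE ρ C σ ⟨⟨(q, i), hqe⟩, hk⟩) = GLHom.onE c2 ⟨⟨(q, i), hqe⟩, hk⟩
      erw [harg, descE_vsub (classify_vsub _ hx.choose_spec rfl)]
      refine congrArg (GLHom.onE c2) (Subtype.ext (Subtype.ext ?_))
      show (C.holePos ++ (ρ.var_cond ⟨hx.choose, hx.choose_spec⟩).choose ++ q', i) = (q, i)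
      rw [hl1 x _ p (Exists.choose_spec (ρ.var_cond ⟨hx.choose, hx.choose_spec⟩)) hv, ← he]

lemma push_uniq {Z : LGraph (FlatL S)} (c1 : (ruleEnc ρ).R ⟶ Z) (c2 : GK ρ C σ ⟶ Z)
    (hcomm : (ruleEnc ρ).r ≫ c1 = uK ρ C σ ≫ c2) (hl2 : ρ.rhs.Linear)
    (mm : TG (C.fill (ρ.rhs.subst σ)) ⟶ Z)
    (h1 : wMatch ρ C σ hl2 ≫ mm = c1) (h2 : gR ρ C σ ≫ mm = c2) :
    mm = descHom c1 c2 hcomm hl2 := by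
  refine GLHom.ext' (funext fun v => ?_) (funext fun e => ?_)
  · obtain ⟨q, hq⟩ := v
    rcases hcl : classify C σ ρ.rhs q hq with ⟨h⟩ | ⟨p, hsym, he⟩ | ⟨x, p, q', hv, he⟩
    · have hvv : gRV ρ C σ (ctxVertS ρ C σ q hq h) = ⟨q, hq⟩ :=
        Subtype.ext (gRV_ctx' (classify_ctx _ h))
      calc GLHom.onV mm ⟨q, hq⟩
          = GLHom.onV mm (gRV ρ C σ (ctxVertS ρ C σ q hq h)) := by rw [hvv]
        _ = GLHom.onV c2 (ctxVertS ρ C σ q hq h) :=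
            congrFun (congrArg GLHom.onV h2) (ctxVertS ρ C σ q hq h)
        _ = descV ρ C σ c1 c2 ⟨q, hq⟩ := (descV_ctx hcl).symm
    · have hvv : patHomV C σ ρ.rhs (Sum.inl ⟨p, hsym⟩) = ⟨q, hq⟩ := Subtype.ext he.symm
      calc GLHom.onV mm ⟨q, hq⟩
          = GLHom.onV mm (patHomV C σ ρ.rhs (Sum.inl ⟨p, hsym⟩)) := by rw [hvv]
        _ = GLHom.onV c1 (Sum.inl ⟨p, hsym⟩) :=
            congrFun (congrArg GLHom.onV h1) (Sum.inl ⟨p, hsym⟩)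
        _ = descV ρ C σ c1 c2 ⟨q, hq⟩ := (descV_pat hcl).symm
    · have hs : ((σ x).sub? q').isSome := t_vsub_isSome ρ C σ hv he hq
      have hvv : gRV ρ C σ (vsubVertS ρ C σ x p q' hv hs) = ⟨q, hq⟩ := by
        apply Subtype.ext
        rw [gRV_vsub' (classify_vsub _ (Exists.choose_spec (ρ.var_cond ⟨p, hv⟩)) rfl)
          (⟨p, hv⟩ : x ∈ ρ.rhs.vars)]
        rw [hl2 x _ p (Exists.choose_spec (⟨p, hv⟩ : x ∈ ρ.rhs.vars)) hv, ← he]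
      calc GLHom.onV mm ⟨q, hq⟩
          = GLHom.onV mm (gRV ρ C σ (vsubVertS ρ C σ x p q' hv hs)) := by rw [hvv]
        _ = GLHom.onV c2 (vsubVertS ρ C σ x p q' hv hs) :=
            congrFun (congrArg GLHom.onV h2) (vsubVertS ρ C σ x p q' hv hs)
        _ = descV ρ C σ c1 c2 ⟨q, hq⟩ := (descV_vsub hcl).symm
  · obtain ⟨⟨q, i⟩, hqe⟩ := e
    rcases hcl : classify C σ ρ.rhs q (edge_src_isSome hqe) with
      ⟨h⟩ | ⟨p, hsym, he⟩ | ⟨x, p, q', hv, he⟩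
    · have hvv : gRE ρ C σ (ctxEdgeS ρ C σ q i hqe h) = ⟨(q, i), hqe⟩ :=
        Subtype.ext (gRE_ctx' (classify_ctx _ h))
      calc GLHom.onE mm ⟨(q, i), hqe⟩
          = GLHom.onE mm (gRE ρ C σ (ctxEdgeS ρ C σ q i hqe h)) := by rw [hvv]
        _ = GLHom.onE c2 (ctxEdgeS ρ C σ q i hqe h) :=
            congrFun (congrArg GLHom.onE h2) (ctxEdgeS ρ C σ q i hqe h)
        _ = descE ρ C σ c1 c2 ⟨(q, i), hqe⟩ := (descE_ctx (e := ⟨(q, i), hqe⟩) hcl).symm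
    · have hvv : patHomE C σ ρ.rhs ⟨(p, i), pat_edge C σ hsym (he ▸ hqe)⟩ = ⟨(q, i), hqe⟩ :=
        Subtype.ext (by show (C.holePos ++ p, i) = (q, i); rw [he])
      calc GLHom.onE mm ⟨(q, i), hqe⟩
          = GLHom.onE mm (patHomE C σ ρ.rhs ⟨(p, i), pat_edge C σ hsym (he ▸ hqe)⟩) := by
            rw [hvv]
        _ = GLHom.onE c1 ⟨(p, i), pat_edge C σ hsym (he ▸ hqe)⟩ :=
            congrFun (congrArg GLHom.onE h1) ⟨(p, i), pat_edge C σ hsym (he ▸ hqe)⟩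
        _ = descE ρ C σ c1 c2 ⟨(q, i), hqe⟩ := (descE_pat (e := ⟨(q, i), hqe⟩) hcl).symm
    · have hs : ((σ x).sub? (q' ++ [i])).isSome := t_vsub_edge_isSome ρ C σ hv he hqe
      have hvv : gRE ρ C σ (vsubEdgeS ρ C σ x p q' i hv hs) = ⟨(q, i), hqe⟩ := by
        apply Subtype.ext
        rw [gRE_vsub' (classify_vsub _ (Exists.choose_spec (ρ.var_cond ⟨p, hv⟩)) rfl)
          (⟨p, hv⟩ : x ∈ ρ.rhs.vars)]
        show (C.holePos ++ Exists.choose _ ++ q', i) = (q, i)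
        rw [hl2 x _ p (Exists.choose_spec (⟨p, hv⟩ : x ∈ ρ.rhs.vars)) hv, ← he]
      calc GLHom.onE mm ⟨(q, i), hqe⟩
          = GLHom.onE mm (gRE ρ C σ (vsubEdgeS ρ C σ x p q' i hv hs)) := by rw [hvv]
        _ = GLHom.onE c2 (vsubEdgeS ρ C σ x p q' i hv hs) :=
            congrFun (congrArg GLHom.onE h2) (vsubEdgeS ρ C σ x p q' i hv hs)
        _ = descE ρ C σ c1 c2 ⟨(q, i), hqe⟩ := (descE_vsub (e := ⟨(q, i), hqe⟩) hcl).symm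

end Descent

section Assemble

open CategoryTheory

variable (ρ : TRSRule S ar X) (C : Ctx S ar X) (σ : X → Term S ar X)

noncomputable def pushIsPushout (hl1 : ρ.lhs.Linear) (hl2 : ρ.rhs.Linear) :
    IsPushout (ruleEnc ρ).r (uK ρ C σ) (wMatch ρ C σ hl2) (gR ρ C σ) := by
  apply IsPushout.of_isColimit
    (c := Limits.PushoutCocone.mk _ _ (push_comm ρ C σ hl2))
  exact Limits.PushoutCocone.IsColimit.mk (push_comm ρ C σ hl2)
    (fun sc => descHom sc.inl sc.inr sc.condition hl2)
    (fun sc => push_fac_left sc.inl sc.inr sc.condition hl2)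
    (fun sc => push_fac_right sc.inl sc.inr sc.condition hl1 hl2)
    (fun sc mm h1 h2 => push_uniq sc.inl sc.inr sc.condition hl2 mm h1 h2)

/-- Soundness: a term rewrite step induces a PBPO⁺ step on tree encodings. -/
lemma step_sound (hl : ρ.Linear) :
    PBPOStep (ruleEnc ρ) (TG (C.fill (ρ.lhs.subst σ))) (TG (C.fill (ρ.rhs.subst σ))) :=
  ⟨{ m := mMatch ρ C σ hl.1
     mono_m := mono_of_injective (mMatch ρ C σ hl.1) (patHomV_inj C σ hl.1)
       (patHomE_inj C σ ρ.lhs)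
     α := aMatch ρ C σ hl.1
     matchPB := matchIsPullback ρ C σ hl.1
     GK := GK ρ C σ
     gL := gexternal ρ C σ
     u' := uPrime ρ C σ
     pbK := gkIsPullback ρ C σ hl.1
     u := uK ρ C σ
     u_u' := uK_u' ρ C σ
     u_gL := uK_gL ρ C σ hl.1
     w := wMatch ρ C σ hl.2
     gR := gR ρ C σ
     po := pushIsPushout ρ C σ hl.1 hl.2 }⟩

end Assemble

end P7


/-- If the encoded system `R°` of a linear TRS `R` is terminating
on all finite `Σ°`-labeled graphs, then `R` is terminating on terms. -/
theorem statement_7 {S : Type} {ar : S → ℕ} {X : Type}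
    (Rs : Set (TRSRule S ar X)) (hlin : ∀ ρ ∈ Rs, ρ.Linear)
    (hterm : ¬ ∃ f : ℕ → LGraph (FlatL S),
      (∀ n, FiniteG (f n)) ∧ ∀ n, SysStep Rs (f n) (f (n + 1))) :
    ¬ ∃ g : ℕ → Term S ar X, ∀ n, TStep Rs (g n) (g (n + 1)) := by
  rintro ⟨g, hg⟩
  apply hterm
  refine ⟨fun n => P7.TG (g n), fun n => P7.TG_finite (g n), fun n => ?_⟩
  obtain ⟨ρ, hρ, Cc, σ, hs, ht⟩ := hg n
  refine ⟨ρ, hρ, ?_⟩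
  show PBPOStep (ruleEnc ρ) (P7.TG (g n)) (P7.TG (g (n + 1)))
  rw [hs, ht]
  exact P7.step_sound ρ Cc σ (hlin ρ hρ)
end
end

section
/- Within a zone Z of a finite Σ°-labeled graph G, for any two vertices u and v of Z there is a vertex x of Z such that there are directed paths from x to u and from x to v using only edges included in Z. -/
open CategoryTheory
open Classical

noncomputable section

theorem rtg_sameZone {S : Type} {ar : S → ℕ} {G : LGraph (FlatL S)} {x u : G.V}
    (h : Relation.ReflTransGen (ZStep G ar) x u) : SameZone G ar x u := by
  induction h with
  | refl => exact Relation.EqvGen.refl _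
  | tail _ step ih => exact Relation.EqvGen.trans _ _ _ ih (Relation.EqvGen.rel _ _ step)

/-- Two directed zone paths ending at the same vertex are comparable. -/
theorem zpath_comparable {S : Type} {ar : S → ℕ} {G : LGraph (FlatL S)} {x v : G.V}
    (h : Relation.ReflTransGen (ZStep G ar) x v) :
    ∀ y, Relation.ReflTransGen (ZStep G ar) y v →
      Relation.ReflTransGen (ZStep G ar) x y ∨ Relation.ReflTransGen (ZStep G ar) y x := by
  induction h with
  | refl => exact fun y hy => Or.inr hy
  | @tail b c h' step ih =>
    intro y hy
    rcases hy.cases_tail with heq | ⟨d, hd, step'⟩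
    · subst heq; exact Or.inl (h'.tail step)
    · obtain ⟨e, he, hse, hte⟩ := step
      obtain ⟨e', he', hse', hte'⟩ := step'
      have hin : InWF G c := by
        have := he.2 e rfl
        rwa [hte] at this
      have : e = e' := hin e e' hte (hte'.trans rfl)
      have hbd : d = b := by rw [← hse, ← hse', this]
      subst hbd
      exact ih y hd

/-- Within a zone `Z` of a finite `Σ°`-labeled graph `G`, for any
two vertices `u` and `v` of `Z` there is a vertex `x` of `Z` with directed
paths from `x` to `u` and from `x` to `v` using only edges included in `Z`. -/
theorem statement_12 {S : Type} (ar : S → ℕ) (G : LGraph (FlatL S))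
    (hfin : FiniteG G) (u v : G.V) (huv : SameZone G ar u v) :
    ∃ x : G.V, SameZone G ar x u ∧
      Relation.ReflTransGen (ZStep G ar) x u ∧
      Relation.ReflTransGen (ZStep G ar) x v := by
  induction huv with
  | rel a b h =>
      exact ⟨a, Relation.EqvGen.refl _, Relation.ReflTransGen.refl,
        Relation.ReflTransGen.single h⟩
  | refl a => exact ⟨a, Relation.EqvGen.refl _, Relation.ReflTransGen.refl,
        Relation.ReflTransGen.refl⟩
  | symm a b _ ih =>
      obtain ⟨x, _, h1, h2⟩ := ih
      exact ⟨x, rtg_sameZone h2, h2, h1⟩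
  | trans a b c _ _ ih1 ih2 =>
      obtain ⟨x, _, hxa, hxb⟩ := ih1
      obtain ⟨y, _, hyb, hyc⟩ := ih2
      rcases zpath_comparable hxb y hyb with h | h
      · exact ⟨x, rtg_sameZone hxa, hxa, h.trans hyc⟩
      · exact ⟨y, rtg_sameZone (h.trans hxa), h.trans hxa, hyc⟩
end
end
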